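/- arXiv:0803.2098 — 5 statements merged into one kernel-verified Lean document; each statement's English description precedes it below -/
import Mathlib

section
/- Let X be a locally path-connected metric space and Y ⊆ X a subset. Then the set L = Fin(X) \ Fin(Y), consisting of all nonempty finite subsets of X not contained in Y, is relatively LC⁰ in the hyperspace Comp(X) of nonempty compact subsets of X with the Hausdorff metric. -/
open Set Topology TopologicalSpace Filter Metric

/-- `Y` is relatively `LC⁰` in `Z` if for every `z ∈ Z` each neighborhood `U` of
`z` contains a smaller neighborhood `V` of `z` such that every two points of
`V ∩ Y` can be joined by a path in `U ∩ Y`. -/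
def RelativelyLC0 {Z : Type*} [TopologicalSpace Z] (Y : Set Z) : Prop :=
  ∀ z : Z, ∀ U ∈ 𝓝 z, ∃ V ∈ 𝓝 z, V ⊆ U ∧
    ∀ a ∈ V ∩ Y, ∀ b ∈ V ∩ Y, JoinedIn (U ∩ Y) a b

/-- A family of finitely many moving points gives a continuous map into the
hyperspace of nonempty compacts. -/
lemma aux_cont_range {X ι Z : Type*} [MetricSpace X] [Finite ι] [Nonempty ι]
    [TopologicalSpace Z] (γ : ι → Z → X) (h : ∀ i, Continuous (γ i)) :
    Continuous fun t => (⟨⟨Set.range fun i => γ i t, (Set.finite_range _).isCompact⟩,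
      Set.range_nonempty _⟩ : NonemptyCompacts X) := by
  rw [continuous_iff_continuousAt]
  intro t
  rw [ContinuousAt, Metric.tendsto_nhds]
  intro ε hε
  have hev : ∀ᶠ s in 𝓝 t, ∀ i, dist (γ i s) (γ i t) < ε / 2 := by
    rw [eventually_all]
    intro i
    exact (Metric.tendsto_nhds.1 ((h i).tendsto t)) _ (by linarith)
  filter_upwards [hev] with s hs
  have hle : hausdorffDist (Set.range fun i => γ i s) (Set.range fun i => γ i t) ≤ ε / 2 := by
    apply hausdorffDist_le_of_mem_dist (by linarith)
    · rintro x ⟨i, rfl⟩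
      exact ⟨γ i t, ⟨i, rfl⟩, (hs i).le⟩
    · rintro y ⟨i, rfl⟩
      exact ⟨γ i s, ⟨i, rfl⟩, by rw [dist_comm]; exact (hs i).le⟩
  calc dist (⟨⟨Set.range fun i => γ i s, (Set.finite_range _).isCompact⟩,
        Set.range_nonempty _⟩ : NonemptyCompacts X)
        ⟨⟨Set.range fun i => γ i t, (Set.finite_range _).isCompact⟩, Set.range_nonempty _⟩
      = hausdorffDist (Set.range fun i => γ i s) (Set.range fun i => γ i t) :=
        NonemptyCompacts.dist_eq
    _ ≤ ε / 2 := hle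
    _ < ε := by linarith

/-- for a locally path-connected metric space `X` and `Y ⊆ X`,
the set `Fin(X) \ Fin(Y)` of nonempty finite subsets of `X` not contained in `Y`
is relatively `LC⁰` in the hyperspace `Comp(X)` of nonempty compact subsets of
`X` with the Hausdorff metric. -/
theorem fin_diff_fin_relativelyLC0
    {X : Type*} [MetricSpace X] [LocallyPathConnectedSpace X] (Y : Set X) :
    RelativelyLC0 {K : NonemptyCompacts X | (K : Set X).Finite ∧ ¬ (K : Set X) ⊆ Y} := by
  intro z U hU
  obtain ⟨ε, hε, hballU⟩ := Metric.mem_nhds_iff.1 hU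
  -- path connected neighborhoods
  have hW : ∀ x : X, ∃ W : Set X, W ∈ 𝓝 x ∧ IsPathConnected W ∧ W ⊆ ball x (ε / 4) := by
    intro x
    obtain ⟨W, ⟨hW1, hW2⟩, hW3⟩ := (path_connected_basis x).mem_iff.1
      (show ball x (ε / 4) ∈ 𝓝 x from ball_mem_nhds x (by linarith))
    exact ⟨W, hW1, hW2, hW3⟩
  choose W hWnhds hWpc hWball using hW
  -- Lebesgue number for the cover of z by interiors of the W x, x ∈ z
  obtain ⟨δ, hδ, hleb⟩ := lebesgue_number_lemma_of_metric z.isCompact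
    (fun x : ↥(z : Set X) => isOpen_interior (s := W (x : X)))
    (fun k hk => mem_iUnion.2 ⟨⟨k, hk⟩, mem_interior_iff_mem_nhds.2 (hWnhds k)⟩)
  set δ₀ := min δ (ε / 4) with hδ₀def
  have hδ₀pos : 0 < δ₀ := lt_min hδ (by linarith)
  have hδ₀δ : δ₀ ≤ δ := min_le_left _ _
  have hδ₀ε : δ₀ ≤ ε / 4 := min_le_right _ _
  refine ⟨ball z (δ₀ / 2), ball_mem_nhds z (by linarith), ?_, ?_⟩
  · exact fun K hK => hballU (by
      simp only [mem_ball] at hK ⊢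
      linarith)
  intro A hA B hB
  obtain ⟨hAV, hAfin, hAY⟩ : dist A z < δ₀ / 2 ∧ (A : Set X).Finite ∧ ¬ (A : Set X) ⊆ Y :=
    ⟨mem_ball.1 hA.1, hA.2.1, hA.2.2⟩
  obtain ⟨hBV, hBfin, hBY⟩ : dist B z < δ₀ / 2 ∧ (B : Set X).Finite ∧ ¬ (B : Set X) ⊆ Y :=
    ⟨mem_ball.1 hB.1, hB.2.1, hB.2.2⟩
  haveI := hAfin.to_subtype
  haveI := hBfin.to_subtype
  haveI : Nonempty ↥(A : Set X) := A.nonempty.to_subtype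
  haveI : Nonempty ↥(B : Set X) := B.nonempty.to_subtype
  -- the "tube" around z in which all paths live
  set T : Set X := ⋃ x ∈ (z : Set X), ball x (ε / 4) with hTdef
  have hedist : ∀ C : NonemptyCompacts X, EMetric.hausdorffEdist (C : Set X) (z : Set X) ≠ ⊤ :=
    fun C => hausdorffEdist_ne_top_of_nonempty_of_bounded C.nonempty z.nonempty
      C.isCompact.isBounded z.isCompact.isBounded
  -- main claim: points of a δ₀/2-close set can be joined inside T to points of
  -- another δ₀/2-close set
  have claim : ∀ C D : NonemptyCompacts X, dist C z < δ₀ / 2 → dist D z < δ₀ / 2 →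
      ∀ c ∈ (C : Set X), ∃ d, d ∈ (D : Set X) ∧ ∃ p : Path c d, ∀ t, p t ∈ T := by
    intro C D hC hD c hc
    rw [NonemptyCompacts.dist_eq] at hC hD
    obtain ⟨k, hk, hck⟩ := exists_dist_lt_of_hausdorffDist_lt hc hC (hedist C)
    obtain ⟨x, hx⟩ := hleb k hk
    obtain ⟨d, hd, hdk⟩ := exists_dist_lt_of_hausdorffDist_lt' hk hD (hedist D)
    have hcW : c ∈ W (x : X) := interior_subset (hx (mem_ball.2 (by linarith)))
    have hdW : d ∈ W (x : X) := interior_subset (hx (mem_ball.2 (by linarith)))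
    obtain ⟨p, hp⟩ := (hWpc (x : X)).joinedIn c hcW d hdW
    refine ⟨d, hd, p, fun t => ?_⟩
    exact mem_biUnion x.2 (hWball (x : X) (hp t))
  -- choose endpoint maps and paths
  choose β hβ p hp using fun a : ↥(A : Set X) => claim A B hAV hBV a a.2
  choose α hα q hq using fun b : ↥(B : Set X) => claim B A hBV hAV b b.2
  -- auxiliary distance facts
  have hforward : ∀ (C : NonemptyCompacts X), dist C z < δ₀ / 2 →
      ∀ c ∈ (C : Set X), ∃ k ∈ (z : Set X), dist c k ≤ ε / 2 := by
    intro C hC c hc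
    rw [NonemptyCompacts.dist_eq] at hC
    obtain ⟨k, hk, hck⟩ := exists_dist_lt_of_hausdorffDist_lt hc hC (hedist C)
    exact ⟨k, hk, by linarith⟩
  have hback : ∀ (C : NonemptyCompacts X), dist C z < δ₀ / 2 →
      ∀ k ∈ (z : Set X), ∃ c ∈ (C : Set X), dist k c ≤ ε / 2 := by
    intro C hC k hk
    rw [NonemptyCompacts.dist_eq] at hC
    obtain ⟨c, hc, hck⟩ := exists_dist_lt_of_hausdorffDist_lt' hk hC (hedist C)
    exact ⟨c, hc, by rw [dist_comm] at hck; linarith⟩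
  have hT : ∀ y ∈ T, ∃ k ∈ (z : Set X), dist y k ≤ ε / 2 := by
    intro y hy
    obtain ⟨x, hx, hyx⟩ := mem_iUnion₂.1 hy
    exact ⟨x, hx, by have := mem_ball.1 hyx; linarith⟩
  -- distinguished points outside Y
  obtain ⟨a₀, ha₀A, ha₀Y⟩ := not_subset.1 hAY
  obtain ⟨b₀, hb₀B, hb₀Y⟩ := not_subset.1 hBY
  -- the two stage families
  set ι := (↥(A : Set X)) ⊕ (↥(B : Set X)) with hιdef
  set f1 : ι → unitInterval → X :=
    Sum.elim (fun a _ => (a : X)) (fun b t => (q b).symm t) with hf1def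
  set f2 : ι → unitInterval → X :=
    Sum.elim (fun a t => p a t) (fun b _ => (b : X)) with hf2def
  have hf1c : ∀ i, Continuous (f1 i) := by
    rintro (a | b)
    · exact continuous_const
    · exact (q b).symm.continuous
  have hf2c : ∀ i, Continuous (f2 i) := by
    rintro (a | b)
    · exact (p a).continuous
    · exact continuous_const
  have hq' : ∀ (b : ↥(B : Set X)) (t : unitInterval), (q b).symm t ∈ T := fun b t =>
    hq b (unitInterval.symm t)
  -- generic membership lemma for both stages
  have hmem : ∀ (f : ι → unitInterval → X),
      (∀ i, ∀ t, f i t ∈ (A : Set X) ∪ (B : Set X) ∪ T) →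
      (∀ k ∈ (z : Set X), ∀ t : unitInterval,
        ∃ y ∈ Set.range fun i => f i t, dist k y ≤ ε / 2) →
      (∀ t, ∃ i, ¬ f i t ∈ Y) →
      ∀ t, (⟨⟨Set.range fun i => f i t, (Set.finite_range _).isCompact⟩,
        Set.range_nonempty _⟩ : NonemptyCompacts X) ∈
        U ∩ {K : NonemptyCompacts X | (K : Set X).Finite ∧ ¬ (K : Set X) ⊆ Y} := by
    intro f hfin hkeep hfY t
    constructor
    · apply hballU
      have hHd : hausdorffDist (Set.range fun i => f i t) (z : Set X) ≤ ε / 2 := by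
        apply hausdorffDist_le_of_mem_dist (by linarith)
        · rintro y ⟨i, rfl⟩
          rcases hfin i t with (h | h) | h
          · exact hforward A hAV _ h
          · exact hforward B hBV _ h
          · exact hT _ h
        · exact fun k hk => hkeep k hk t
      rw [mem_ball, NonemptyCompacts.dist_eq]
      exact lt_of_le_of_lt hHd (by linarith)
    · refine ⟨Set.finite_range _, fun hsub => ?_⟩
      obtain ⟨i, hi⟩ := hfY t
      exact hi (hsub ⟨i, rfl⟩)
  -- the middle point of the path
  set M : NonemptyCompacts X := A ⊔ B with hMdef
  -- stage 1 : from A to A ⊔ B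
  have hsrc1 : (Set.range fun i => f1 i 0) = (A : Set X) := by
    apply Set.eq_of_subset_of_subset
    · rintro y ⟨(a | b), rfl⟩
      · exact a.2
      · show (q b).symm 0 ∈ (A : Set X)
        rw [(q b).symm.source]
        exact hα b
    · intro y hy
      exact ⟨Sum.inl ⟨y, hy⟩, rfl⟩
  have htgt1 : (Set.range fun i => f1 i 1) = (A : Set X) ∪ (B : Set X) := by
    apply Set.eq_of_subset_of_subset
    · rintro y ⟨(a | b), rfl⟩
      · exact Or.inl a.2
      · show (q b).symm 1 ∈ _
        rw [(q b).symm.target]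
        exact Or.inr b.2
    · rintro y (hy | hy)
      · exact ⟨Sum.inl ⟨y, hy⟩, rfl⟩
      · exact ⟨Sum.inr ⟨y, hy⟩, (q ⟨y, hy⟩).symm.target⟩
  have hJ1 : JoinedIn (U ∩ {K : NonemptyCompacts X | (K : Set X).Finite ∧ ¬ (K : Set X) ⊆ Y})
      A M := by
    refine ⟨⟨⟨fun t => ⟨⟨Set.range fun i => f1 i t, (Set.finite_range _).isCompact⟩,
      Set.range_nonempty _⟩, aux_cont_range f1 hf1c⟩, ?_, ?_⟩, ?_⟩
    · exact NonemptyCompacts.ext hsrc1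
    · exact NonemptyCompacts.ext (show (Set.range fun i => f1 i 1) = _ by
        rw [htgt1, hMdef, NonemptyCompacts.coe_sup])
    · intro t
      apply hmem f1
      · rintro (a | b) s
        · exact Or.inl (Or.inl a.2)
        · exact Or.inr (hq' b s)
      · intro k hk s
        obtain ⟨c, hc, hck⟩ := hback A hAV k hk
        exact ⟨c, ⟨Sum.inl ⟨c, hc⟩, rfl⟩, hck⟩
      · exact fun s => ⟨Sum.inl ⟨a₀, ha₀A⟩, ha₀Y⟩
  -- stage 2 : from A ⊔ B to B
  have hsrc2 : (Set.range fun i => f2 i 0) = (A : Set X) ∪ (B : Set X) := by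
    apply Set.eq_of_subset_of_subset
    · rintro y ⟨(a | b), rfl⟩
      · show (p a) 0 ∈ _
        rw [(p a).source]
        exact Or.inl a.2
      · exact Or.inr b.2
    · rintro y (hy | hy)
      · exact ⟨Sum.inl ⟨y, hy⟩, (p ⟨y, hy⟩).source⟩
      · exact ⟨Sum.inr ⟨y, hy⟩, rfl⟩
  have htgt2 : (Set.range fun i => f2 i 1) = (B : Set X) := by
    apply Set.eq_of_subset_of_subset
    · rintro y ⟨(a | b), rfl⟩
      · show (p a) 1 ∈ _
        rw [(p a).target]
        exact hβ a
      · exact b.2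
    · intro y hy
      exact ⟨Sum.inr ⟨y, hy⟩, rfl⟩
  have hJ2 : JoinedIn (U ∩ {K : NonemptyCompacts X | (K : Set X).Finite ∧ ¬ (K : Set X) ⊆ Y})
      M B := by
    refine ⟨⟨⟨fun t => ⟨⟨Set.range fun i => f2 i t, (Set.finite_range _).isCompact⟩,
      Set.range_nonempty _⟩, aux_cont_range f2 hf2c⟩, ?_, ?_⟩, ?_⟩
    · exact NonemptyCompacts.ext (show (Set.range fun i => f2 i 0) = _ by
        rw [hsrc2, hMdef, NonemptyCompacts.coe_sup])
    · exact NonemptyCompacts.ext htgt2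
    · intro t
      apply hmem f2
      · rintro (a | b) s
        · exact Or.inr (hp a s)
        · exact Or.inl (Or.inr b.2)
      · intro k hk s
        obtain ⟨c, hc, hck⟩ := hback B hBV k hk
        exact ⟨c, ⟨Sum.inr ⟨c, hc⟩, rfl⟩, hck⟩
      · exact fun s => ⟨Sum.inr ⟨b₀, hb₀B⟩, hb₀Y⟩
  exact hJ1.trans hJ2
end

section
/- If X is a locally connected, locally compact, separable metrizable space with no compact connected components, then its Alexandroff one-point compactification αX is a Peano continuum, i.e., αX is compact, connected, locally connected and metrizable. -/
open Set Topology TopologicalSpace Filter OnePoint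

section OnePointAuxSection

variable {X : Type*} [TopologicalSpace X]

/-- If a connected set `D` is not contained in any compact set, then `∞` lies in the
closure of its image in `OnePoint X`. -/
lemma OnePointAux.infty_mem_closure {D : Set X}
    (h : ∀ K : Set X, IsCompact K → ¬ D ⊆ K) :
    (∞ : OnePoint X) ∈ closure (((↑) : X → OnePoint X) '' D) := by
  rw [mem_closure_iff_nhds_basis OnePoint.hasBasis_nhds_infty]
  rintro s ⟨hscl, hscomp⟩
  obtain ⟨x, hxD, hxs⟩ := not_subset.mp (h s hscomp)
  exact ⟨(x : OnePoint X), mem_image_of_mem _ hxD, Or.inl (mem_image_of_mem _ hxs)⟩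

/-- Adjoining `∞` to the image of an unbounded preconnected set keeps it preconnected. -/
lemma OnePointAux.preconn_insert {D : Set X} (hD : IsPreconnected D)
    (h : ∀ K : Set X, IsCompact K → ¬ D ⊆ K) :
    IsPreconnected (insert (∞ : OnePoint X) (((↑) : X → OnePoint X) '' D)) :=
  (hD.image _ OnePoint.continuous_coe.continuousOn).subset_closure
    (subset_insert _ _)
    (insert_subset (OnePointAux.infty_mem_closure h) subset_closure)

/-- A preconnected set meeting both `M` and its complement meets the frontier of `M`. -/
lemma OnePointAux.inter_frontier_nonempty {α : Type*} [TopologicalSpace α] {C M : Set α}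
    (hC : IsPreconnected C) (h1 : (C ∩ M).Nonempty) (h2 : (C \ M).Nonempty) :
    (C ∩ frontier M).Nonempty := by
  by_contra hfr
  rw [not_nonempty_iff_eq_empty] at hfr
  have hsub : C ⊆ interior M ∪ (closure M)ᶜ := by
    intro z hz
    have hzf : z ∉ frontier M := fun hf => (eq_empty_iff_forall_notMem.mp hfr z) ⟨hz, hf⟩
    by_cases hzc : z ∈ closure M
    · exact Or.inl (by
        by_contra hzi
        exact hzf ⟨hzc, hzi⟩)
    · exact Or.inr hzc
  obtain ⟨p, hpC, hpM⟩ := h1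
  obtain ⟨q, hqC, hqM⟩ := h2
  have h1' : (C ∩ interior M).Nonempty := by
    refine ⟨p, hpC, ?_⟩
    rcases hsub hpC with h | h
    · exact h
    · exact absurd (subset_closure hpM) h
  have h2' : (C ∩ (closure M)ᶜ).Nonempty := by
    refine ⟨q, hqC, ?_⟩
    rcases hsub hqC with h | h
    · exact absurd (interior_subset h) hqM
    · exact h
  obtain ⟨z, _, hz1, hz2⟩ :=
    hC (interior M) (closure M)ᶜ isOpen_interior (isOpen_compl_iff.mpr isClosed_closure)
      hsub h1' h2'
  exact hz2 (subset_closure (interior_subset hz1))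

/-- Second countability of the one-point compactification. -/
lemma OnePointAux.secondCountable [T2Space X] [LocallyCompactSpace X]
    [SecondCountableTopology X] : SecondCountableTopology (OnePoint X) := by
  haveI : SigmaCompactSpace X := inferInstance
  set K : CompactExhaustion X := CompactExhaustion.choice X with hK
  set 𝒞 : Set (Set (OnePoint X)) :=
    ((fun s : Set X => ((↑) : X → OnePoint X) '' s) '' countableBasis X) ∪
      (range fun n : ℕ => (((↑) : X → OnePoint X) '' (K n))ᶜ) with h𝒞
  have hcount : 𝒞.Countable :=
    ((countable_countableBasis X).image _).union (countable_range _)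
  refine IsTopologicalBasis.secondCountableTopology (b := 𝒞) ?_ hcount
  refine isTopologicalBasis_of_isOpen_of_nhds ?_ ?_
  · rintro u (⟨s, hs, rfl⟩ | ⟨n, rfl⟩)
    · exact OnePoint.isOpenMap_coe _ (isOpen_of_mem_countableBasis hs)
    · exact OnePoint.isOpen_compl_image_coe.mpr ⟨(K.isCompact n).isClosed, K.isCompact n⟩
  · rintro (_ | x) u hau hu
    · -- a = ∞
      have h := (OnePoint.isOpen_iff_of_mem hau).mp hu
      set C : Set X := (((↑) : X → OnePoint X) ⁻¹' u)ᶜ with hC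
      have hCcomp : IsCompact C := h.2
      -- C is contained in some K n
      obtain ⟨n, hn⟩ : ∃ n, C ⊆ K n := by
        have hcover : C ⊆ ⋃ n, interior (K n) := by
          intro x _
          obtain ⟨n, hn⟩ := K.exists_mem x
          exact mem_iUnion.mpr ⟨n + 1, K.subset_interior_succ n hn⟩
        obtain ⟨t, ht⟩ := hCcomp.elim_finite_subcover _
          (fun n => isOpen_interior) hcover
        rcases t.eq_empty_or_nonempty with rfl | htne
        · refine ⟨0, ?_⟩
          intro x hx
          simpa using ht hx
        · obtain ⟨m, hm⟩ := t.exists_le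
          refine ⟨m, fun x hx => ?_⟩
          obtain ⟨i, hit, hxi⟩ := by simpa using ht hx
          exact K.subset (hm i hit) (interior_subset hxi)
      refine ⟨(((↑) : X → OnePoint X) '' (K n))ᶜ, Or.inr ⟨n, rfl⟩, ?_, ?_⟩
      · exact fun h => OnePoint.infty_notMem_image_coe h
      · rintro (_ | y) hy
        · exact hau
        · have hyK : y ∉ (K n : Set X) := fun h => hy (mem_image_of_mem _ h)
          have : y ∉ C := fun h => hyK (hn h)
          have h' : ((y : OnePoint X)) ∈ u := by simpa [hC] using this
          exact h'
    · -- a = ↑x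
      have hx : x ∈ ((↑) : X → OnePoint X) ⁻¹' u := hau
      have hpre : IsOpen (((↑) : X → OnePoint X) ⁻¹' u) := hu.preimage OnePoint.continuous_coe
      obtain ⟨s, hs, hxs, hsu⟩ :=
        (isBasis_countableBasis X).exists_subset_of_mem_open hx hpre
      exact ⟨((↑) : X → OnePoint X) '' s, Or.inl ⟨s, hs, rfl⟩, mem_image_of_mem _ hxs,
        (image_mono hsu).trans (image_preimage_subset _ _)⟩

variable [LocallyConnectedSpace X] [LocallyCompactSpace X] [T2Space X]
  (hcomp : ∀ x : X, ¬ IsCompact (connectedComponent x))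

include hcomp in
/-- Connectedness of the one-point compactification when no component of `X` is compact. -/
lemma OnePointAux.connected : ConnectedSpace (OnePoint X) := by
  refine { toNonempty := ⟨∞⟩, isPreconnected_univ := ?_ }
  have key : ∀ x : X, ∀ K : Set X, IsCompact K → ¬ connectedComponent x ⊆ K := by
    intro x K hK hsub
    exact hcomp x (hK.of_isClosed_subset isClosed_connectedComponent hsub)
  set c : Set (Set (OnePoint X)) :=
    insert {∞} (range fun x : X => insert ∞ (((↑) : X → OnePoint X) '' connectedComponent x))
    with hc
  have hunion : ⋃₀ c = univ := by
    apply eq_univ_of_forall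
    rintro (_ | x)
    · exact ⟨{∞}, mem_insert _ _, rfl⟩
    · exact ⟨insert ∞ (((↑) : X → OnePoint X) '' connectedComponent x),
        Or.inr ⟨x, rfl⟩, Or.inr (mem_image_of_mem _ mem_connectedComponent)⟩
  rw [← hunion]
  refine isPreconnected_sUnion ∞ c ?_ ?_
  · rintro s (rfl | ⟨x, rfl⟩)
    · exact rfl
    · exact mem_insert _ _
  · rintro s (rfl | ⟨x, rfl⟩)
    · exact isPreconnected_singleton
    · exact OnePointAux.preconn_insert isPreconnected_connectedComponent (key x)

include hcomp in
/-- Local connectedness of the one-point compactification when no component of `X`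
is compact. -/
lemma OnePointAux.locallyConnected : LocallyConnectedSpace (OnePoint X) := by
  rw [locallyConnectedSpace_iff_subsets_isOpen_isConnected]
  rintro (_ | x) U hU
  · -- at ∞
    obtain ⟨L, ⟨hLcl, hLcomp⟩, hLU⟩ := OnePoint.hasBasis_nhds_infty.mem_iff.mp hU
    set W : Set X := Lᶜ with hWdef
    have hWopen : IsOpen W := hLcl.isOpen_compl
    set T : Set X := {y : X | y ∈ W ∧ ¬ IsCompact (closure (connectedComponentIn W y))}
      with hTdef
    -- components of points of T lie in T
    have hTsat : ∀ y ∈ T, connectedComponentIn W y ⊆ T := by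
      intro y hy z hz
      refine ⟨connectedComponentIn_subset _ _ hz, ?_⟩
      rw [← connectedComponentIn_eq hz]
      exact hy.2
    have hTopen : IsOpen T := by
      rw [isOpen_iff_forall_mem_open]
      intro y hy
      exact ⟨connectedComponentIn W y, hTsat y hy, hWopen.connectedComponentIn,
        mem_connectedComponentIn hy.1⟩
    set S : Set X := Tᶜ with hSdef
    have hScl : IsClosed S := hTopen.isClosed_compl
    -- components of T are not contained in compact sets
    have hTunbdd : ∀ y ∈ T, ∀ K : Set X, IsCompact K → ¬ connectedComponentIn W y ⊆ K := by
      intro y hy K hK hsub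
      exact hy.2 (hK.of_isClosed_subset isClosed_closure (closure_minimal hsub hK.isClosed))
    -- a compact "collar"
    obtain ⟨M, hMcomp, hLM⟩ := exists_compact_superset hLcomp
    have hMcl : IsClosed M := hMcomp.isClosed
    have hFcomp : IsCompact (frontier M) :=
      hMcomp.of_isClosed_subset isClosed_frontier
        (frontier_subset_closure.trans hMcl.closure_eq.subset)
    have hFW : frontier M ⊆ W := by
      intro z hz hzL
      exact hz.2 (hLM hzL)
    -- finitely many components cover the frontier
    obtain ⟨t, htF, htfin, htcover⟩ :=
      hFcomp.elim_finite_subcover_image (fun z (_ : z ∈ frontier M) => hWopen.connectedComponentIn)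
        (fun z hz => mem_biUnion hz (mem_connectedComponentIn (hFW hz)))
    set t' : Set X := {z ∈ t | IsCompact (closure (connectedComponentIn W z))} with ht'def
    have hbig : IsCompact (M ∪ ⋃ z ∈ t', closure (connectedComponentIn W z)) := by
      refine hMcomp.union ?_
      refine (htfin.subset (sep_subset _ _)).isCompact_biUnion ?_
      exact fun z hz => hz.2
    have hSsub : S ⊆ M ∪ ⋃ z ∈ t', closure (connectedComponentIn W z) := by
      intro y hyS
      by_cases hyM : y ∈ M
      · exact Or.inl hyM
      · have hyL : y ∉ L := fun h => hyM (interior_subset (hLM h))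
        have hyW : y ∈ W := hyL
        have hybdd : IsCompact (closure (connectedComponentIn W y)) := by
          by_contra hnc
          exact hyS ⟨hyW, hnc⟩
        set C : Set X := connectedComponentIn W y with hCdef
        have hyC : y ∈ C := mem_connectedComponentIn hyW
        -- the closure of C must meet L
        have hclL : (closure C ∩ L).Nonempty := by
          by_contra hne
          rw [not_nonempty_iff_eq_empty] at hne
          have hclW : closure C ⊆ W := fun z hz hzL =>
            (eq_empty_iff_forall_notMem.mp hne z) ⟨hz, hzL⟩
          have hCeq : closure C = C :=
            subset_antisymm
              (isPreconnected_connectedComponentIn.closure.subset_connectedComponentIn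
                (subset_closure hyC) hclW)
              subset_closure
          have hCclopen : IsClopen C := ⟨hCeq ▸ isClosed_closure, hWopen.connectedComponentIn⟩
          have : connectedComponent y ⊆ C := hCclopen.connectedComponent_subset hyC
          exact hcomp y ((hCeq ▸ hybdd).of_isClosed_subset isClosed_connectedComponent this)
        -- hence C meets the interior of M
        have hCintM : (C ∩ M).Nonempty := by
          obtain ⟨p, hpcl, hpL⟩ := hclL
          obtain ⟨q, hq1, hq2⟩ :=
            _root_.mem_closure_iff.mp hpcl (interior M) isOpen_interior (hLM hpL)
          exact ⟨q, hq2, interior_subset hq1⟩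
        obtain ⟨q, hqC, hqF⟩ :=
          OnePointAux.inter_frontier_nonempty isPreconnected_connectedComponentIn
            hCintM ⟨y, hyC, hyM⟩
        obtain ⟨z, hzt, hqz⟩ := mem_iUnion₂.mp (htcover hqF)
        have hzC : connectedComponentIn W z = C := by
          rw [connectedComponentIn_eq hqz, hCdef, connectedComponentIn_eq hqC]
        refine Or.inr (mem_biUnion (show z ∈ t' from ⟨hzt, hzC ▸ hybdd⟩) ?_)
        exact hzC ▸ subset_closure hyC
    have hScomp : IsCompact S := hbig.of_isClosed_subset hScl hSsub
    refine ⟨(((↑) : X → OnePoint X) '' S)ᶜ, ?_, ?_, ?_, ?_⟩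
    · -- ⊆ U
      refine subset_trans ?_ hLU
      rw [OnePoint.compl_image_coe, hSdef, compl_compl]
      refine union_subset_union_left _ (image_mono ?_)
      exact fun y hy => hy.1
    · exact OnePoint.isOpen_compl_image_coe.mpr ⟨hScl, hScomp⟩
    · exact OnePoint.infty_notMem_image_coe
    · -- connected
      have hVeq : (((↑) : X → OnePoint X) '' S)ᶜ =
          ⋃₀ insert {∞}
            ((fun y : X => insert (∞ : OnePoint X)
              (((↑) : X → OnePoint X) '' connectedComponentIn W y)) '' T) := by
        rw [OnePoint.compl_image_coe, hSdef, compl_compl]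
        apply subset_antisymm
        · rintro a (⟨x, hxT, rfl⟩ | rfl)
          · exact ⟨insert ∞ (((↑) : X → OnePoint X) '' connectedComponentIn W x),
              Or.inr ⟨x, hxT, rfl⟩, Or.inr (mem_image_of_mem _ (mem_connectedComponentIn hxT.1))⟩
          · exact ⟨{∞}, mem_insert _ _, rfl⟩
        · rintro a ⟨s, (rfl | ⟨y, hyT, rfl⟩), ha⟩
          · exact Or.inr ha
          · rcases ha with rfl | ⟨x, hx, rfl⟩
            · exact Or.inr rfl
            · exact Or.inl ⟨x, hTsat y hyT hx, rfl⟩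
      constructor
      · exact ⟨∞, OnePoint.infty_notMem_image_coe⟩
      · rw [hVeq]
        refine isPreconnected_sUnion ∞ _ ?_ ?_
        · rintro s (rfl | ⟨y, hyT, rfl⟩)
          · exact rfl
          · exact mem_insert _ _
        · rintro s (rfl | ⟨y, hyT, rfl⟩)
          · exact isPreconnected_singleton
          · exact OnePointAux.preconn_insert isPreconnected_connectedComponentIn
              (hTunbdd y hyT)
  · -- at a coe point
    have hU' : ((↑) : X → OnePoint X) ⁻¹' U ∈ 𝓝 x := by
      rw [← OnePoint.comap_coe_nhds x]
      exact preimage_mem_comap hU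
    obtain ⟨V, hVU, hVopen, hxV, hVconn⟩ :=
      locallyConnectedSpace_iff_subsets_isOpen_isConnected.mp ‹_› x _ hU'
    exact ⟨((↑) : X → OnePoint X) '' V,
      (image_mono hVU).trans (image_preimage_subset _ _),
      OnePoint.isOpenMap_coe _ hVopen, mem_image_of_mem _ hxV,
      hVconn.image _ OnePoint.continuous_coe.continuousOn⟩

end OnePointAuxSection

/-- if `X` is a locally connected, locally compact, separable
metrizable space with no compact connected components, then its Alexandroff
one-point compactification `αX` is a Peano continuum, i.e. compact, connected,
locally connected and metrizable. -/
theorem onePoint_peano_continuum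
    {X : Type*} [TopologicalSpace X] [LocallyConnectedSpace X]
    [LocallyCompactSpace X] [SeparableSpace X] [MetrizableSpace X]
    (hcomp : ∀ x : X, ¬ IsCompact (connectedComponent x)) :
    CompactSpace (OnePoint X) ∧ ConnectedSpace (OnePoint X) ∧
      LocallyConnectedSpace (OnePoint X) ∧ MetrizableSpace (OnePoint X) := by
  haveI : SecondCountableTopology X := by
    letI : MetricSpace X := TopologicalSpace.metrizableSpaceMetric X
    exact UniformSpace.secondCountable_of_separable X
  haveI : SecondCountableTopology (OnePoint X) := OnePointAux.secondCountable
  exact ⟨inferInstance, OnePointAux.connected hcomp, OnePointAux.locallyConnected hcomp,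
    inferInstance⟩
end

section
/- Let (X,d) be a metric space whose completion X̄ is proper, locally connected and has no bounded connected component, and let (αX, ρ) be the one-point extension of X. Then the completion of (αX, ρ) is a Peano continuum, i.e., it is compact, connected and locally connected. -/
open Metric Set Topology Filter Bornology

/-- The metric `ρ` of the one-point extension `αX = X ∪ {∞}`, where `∞ = none`. -/
noncomputable def rho {X : Type*} [MetricSpace X] (x₀ : X) :
    Option X → Option X → ℝ
  | some x, some y => min (dist x y) (1 / (1 + dist x x₀) + 1 / (1 + dist y x₀))
  | some x, none => 1 / (1 + dist x x₀)
  | none, some y => 1 / (1 + dist y x₀)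
  | none, none => 0

section OnePointExt

open UniformSpace

variable {Y : Type*} [MetricSpace Y]

private lemma gf_pos (y₀ y : Y) : 0 < 1 / (1 + dist y y₀) := by positivity

private lemma gf_lip (y₀ x y : Y) :
    1 / (1 + dist x y₀) ≤ 1 / (1 + dist y y₀) + dist x y := by
  have h1 : (0:ℝ) < 1 + dist x y₀ := by positivity
  have h2 : (0:ℝ) < 1 + dist y y₀ := by positivity
  have h3 : dist y y₀ ≤ dist x y + dist x y₀ := by
    calc dist y y₀ ≤ dist y x + dist x y₀ := dist_triangle _ _ _
    _ = dist x y + dist x y₀ := by rw [dist_comm]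
  have h4 : (0:ℝ) ≤ dist x y := dist_nonneg
  have key : 1/(1+dist x y₀) - 1/(1+dist y y₀)
      = (dist y y₀ - dist x y₀) / ((1+dist x y₀)*(1+dist y y₀)) := by
    rw [div_sub_div _ _ h1.ne' h2.ne']
    congr 1
    ring
  have h6 : (1:ℝ) ≤ (1+dist x y₀)*(1+dist y y₀) := by
    nlinarith [dist_nonneg (x := x) (y := y₀), dist_nonneg (x := y) (y := y₀)]
  have h5 : (dist y y₀ - dist x y₀) / ((1+dist x y₀)*(1+dist y y₀)) ≤ dist x y := by
    rw [div_le_iff₀ (by positivity)]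
    nlinarith
  linarith

private lemma rho_self' (y₀ : Y) (p : Option Y) : rho y₀ p p = 0 := by
  rcases p with _ | x
  · simp [rho]
  · simp only [rho, dist_self]
    exact min_eq_left (by positivity)

private lemma rho_comm' (y₀ : Y) (p q : Option Y) : rho y₀ p q = rho y₀ q p := by
  rcases p with _ | x <;> rcases q with _ | y <;> simp only [rho]
  rw [dist_comm, add_comm]

private lemma rho_nonneg' (y₀ : Y) (p q : Option Y) : 0 ≤ rho y₀ p q := by
  rcases p with _ | x <;> rcases q with _ | y <;> simp only [rho, le_refl]
  · positivity
  · positivity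
  · exact le_min dist_nonneg (by positivity)

private lemma rho_triangle' (y₀ : Y) (p q r : Option Y) :
    rho y₀ p r ≤ rho y₀ p q + rho y₀ q r := by
  rcases p with _ | x
  · rcases q with _ | y
    · rcases r with _ | z
      · simp [rho]
      · simp only [rho]
        simp
    · rcases r with _ | z
      · simp only [rho]
        positivity
      · -- none, some y, some z
        simp only [rho]
        rcases le_total (dist y z) (1 / (1 + dist y y₀) + 1 / (1 + dist z y₀)) with h | h
        · rw [min_eq_left h]
          have hl := gf_lip y₀ z y
          rw [dist_comm z y] at hl
          linarith
        · rw [min_eq_right h]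
          have := gf_pos y₀ y
          linarith
  · rcases q with _ | y
    · rcases r with _ | z
      · simp only [rho]
        simp
      · -- some x, none, some z
        simp only [rho]
        exact min_le_right _ _
    · rcases r with _ | z
      · -- some x, some y, none
        simp only [rho]
        rcases le_total (dist x y) (1 / (1 + dist x y₀) + 1 / (1 + dist y y₀)) with h | h
        · rw [min_eq_left h]
          have := gf_lip y₀ x y
          linarith
        · rw [min_eq_right h]
          have := gf_pos y₀ y
          linarith
      · -- some some some
        simp only [rho]
        rcases le_total (dist x y) (1 / (1 + dist x y₀) + 1 / (1 + dist y y₀)) with h1 | h1 <;>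
          rcases le_total (dist y z) (1 / (1 + dist y y₀) + 1 / (1 + dist z y₀)) with h2 | h2
        · rw [min_eq_left h1, min_eq_left h2]
          exact le_trans (min_le_left _ _) (dist_triangle x y z)
        · rw [min_eq_left h1, min_eq_right h2]
          have hx := gf_lip y₀ x y
          exact le_trans (min_le_right _ _) (by linarith)
        · rw [min_eq_right h1, min_eq_left h2]
          have hz := gf_lip y₀ z y
          rw [dist_comm z y] at hz
          exact le_trans (min_le_right _ _) (by linarith)
        · rw [min_eq_right h1, min_eq_right h2]
          have := gf_pos y₀ y
          exact le_trans (min_le_right _ _) (by linarith)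

private lemma rho_eq_zero' (y₀ : Y) (p q : Option Y) (h : rho y₀ p q = 0) : p = q := by
  rcases p with _ | x <;> rcases q with _ | y
  · rfl
  · exact absurd h (ne_of_gt (gf_pos y₀ y))
  · exact absurd h (ne_of_gt (gf_pos y₀ x))
  · simp only [rho] at h
    rcases min_cases (dist x y) (1 / (1 + dist x y₀) + 1 / (1 + dist y y₀)) with
      ⟨heq, _⟩ | ⟨heq, _⟩
    · rw [heq] at h
      exact congrArg some (dist_eq_zero.mp h)
    · rw [heq] at h
      have := gf_pos y₀ x
      have := gf_pos y₀ y
      linarith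

/-- The one-point extension metric space structure on `Option Y`. -/
noncomputable def rhoMetric (y₀ : Y) : MetricSpace (Option Y) where
  dist := rho y₀
  dist_self := rho_self' y₀
  dist_comm := rho_comm' y₀
  dist_triangle p q r := rho_triangle' y₀ p q r
  eq_of_dist_eq_zero {p q} h := rho_eq_zero' y₀ p q h
  edist_dist p q := rfl

end OnePointExt

section OnePtLemmas

open UniformSpace

variable {Y : Type*} [MetricSpace Y] {y₀ : Y} [MetricSpace (Option Y)]

private lemma dist_some_none (hd : ∀ p q : Option Y, dist p q = rho y₀ p q) (a : Y) :
    dist (some a) (none : Option Y) = 1 / (1 + dist a y₀) := by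
  rw [hd]; rfl

private lemma dist_some_le (hd : ∀ p q : Option Y, dist p q = rho y₀ p q) (a b : Y) :
    dist (some a : Option Y) (some b) ≤ dist a b := by
  rw [hd]; exact min_le_left _ _

private lemma continuous_some (hd : ∀ p q : Option Y, dist p q = rho y₀ p q) :
    Continuous (some : Y → Option Y) :=
  (LipschitzWith.of_dist_le_mul (K := 1) fun a b => by
    rw [NNReal.coe_one, one_mul]; exact dist_some_le hd a b).continuous

private lemma dist_none_lt (hd : ∀ p q : Option Y, dist p q = rho y₀ p q)
    {a : Y} {ε : ℝ} (hε : 0 < ε) (h : 1/ε < dist a y₀) :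
    dist (some a) (none : Option Y) < ε := by
  rw [dist_some_none hd]
  have h1 : (0:ℝ) < 1 + dist a y₀ := by positivity
  rw [div_lt_iff₀ h1]
  calc (1:ℝ) = ε * (1/ε) := by field_simp
  _ < ε * (1 + dist a y₀) := by
      apply mul_lt_mul_of_pos_left _ hε
      linarith

omit [MetricSpace (Option Y)] in
private lemma exists_far {A : Set Y} (hA : ¬ IsBounded A) (r : ℝ) :
    ∃ z ∈ A, r < dist z y₀ := by
  by_contra hc
  push_neg at hc
  exact hA ((isBounded_iff_subset_closedBall y₀).2
    ⟨r, fun z hz => mem_closedBall.2 (hc z hz)⟩)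

private lemma none_mem_closure (hd : ∀ p q : Option Y, dist p q = rho y₀ p q)
    {A : Set Y} (hA : ¬ IsBounded A) :
    (none : Option Y) ∈ closure (some '' A) := by
  rw [Metric.mem_closure_iff]
  intro ε hε
  obtain ⟨z, hzA, hz⟩ := exists_far (y₀ := y₀) hA (max (1/ε) 0)
  refine ⟨some z, mem_image_of_mem _ hzA, ?_⟩
  rw [dist_comm]
  exact dist_none_lt hd hε (lt_of_le_of_lt (le_max_left _ _) hz)

private lemma insert_none_preconnected (hd : ∀ p q : Option Y, dist p q = rho y₀ p q)
    {A : Set Y} (hA : IsPreconnected A) (hub : ¬ IsBounded A) :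
    IsPreconnected (insert (none : Option Y) (some '' A)) := by
  have h1 : IsPreconnected (some '' A) := hA.image _ (continuous_some hd).continuousOn
  refine h1.subset_closure (subset_insert _ _) ?_
  rw [insert_subset_iff]
  exact ⟨none_mem_closure hd hub, subset_closure⟩

private lemma ball_subset_image (hd : ∀ p q : Option Y, dist p q = rho y₀ p q)
    (a : Y) {r : ℝ} (hr : r ≤ 1/(1 + dist a y₀)) :
    ball (some a : Option Y) r ⊆ some '' (ball a r) := by
  rintro (_ | z) hp
  · rw [mem_ball, dist_comm, dist_some_none hd] at hp
    exact absurd hp (not_lt.mpr hr)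
  · rw [mem_ball, hd] at hp
    refine ⟨z, ?_, rfl⟩
    rw [mem_ball]
    rcases min_lt_iff.mp hp with h | h
    · exact h
    · exfalso
      have := gf_pos y₀ z
      linarith

private lemma map_nhds_some (hd : ∀ p q : Option Y, dist p q = rho y₀ p q) (a : Y) :
    map some (𝓝 a) = 𝓝 (some a : Option Y) := by
  apply le_antisymm
  · exact (continuous_some hd).tendsto a
  · intro s hs
    rw [mem_map] at hs
    obtain ⟨δ, hδ, hδs⟩ := Metric.mem_nhds_iff.mp hs
    have hg : (0:ℝ) < 1/(1 + dist a y₀) := gf_pos y₀ a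
    refine Metric.mem_nhds_iff.mpr ⟨min δ (1/(1 + dist a y₀)), lt_min hδ hg, ?_⟩
    calc ball (some a : Option Y) (min δ (1/(1 + dist a y₀)))
        ⊆ some '' (ball a (min δ (1/(1 + dist a y₀)))) :=
          ball_subset_image hd a (min_le_right _ _)
      _ ⊆ some '' (ball a δ) := image_mono (ball_subset_ball (min_le_left _ _))
      _ ⊆ some '' (some ⁻¹' s) := image_mono hδs
      _ ⊆ s := image_preimage_subset _ _

private lemma compactSpace_onePt (hd : ∀ p q : Option Y, dist p q = rho y₀ p q)
    [ProperSpace Y] : CompactSpace (Option Y) := by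
  rw [compactSpace_iff_seqCompactSpace]
  refine ⟨fun u _ => ?_⟩
  by_cases hc : ∃ c > 0, ∃ᶠ n in atTop, c ≤ dist (u n) (none : Option Y)
  · obtain ⟨c, hc0, hfreq⟩ := hc
    obtain ⟨φ, hφ, hφc⟩ := extraction_of_frequently_atTop hfreq
    have hsome : ∀ n, ∃ y : Y, u (φ n) = some y := by
      intro n
      rcases h : u (φ n) with _ | y
      · exfalso
        have h1 := hφc n
        rw [h, dist_self] at h1
        linarith
      · exact ⟨y, rfl⟩
    choose v hv using hsome
    have hball : ∀ n, v n ∈ closedBall y₀ (1/c) := by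
      intro n
      have h1 := hφc n
      rw [hv n, dist_some_none hd] at h1
      have h2 : (0:ℝ) < 1 + dist (v n) y₀ := by positivity
      rw [le_div_iff₀ h2] at h1
      rw [mem_closedBall, le_div_iff₀ hc0]
      nlinarith [dist_nonneg (x := v n) (y := y₀)]
    obtain ⟨z, _, ψ, hψ, hvz⟩ := (isCompact_closedBall y₀ (1/c)).tendsto_subseq hball
    refine ⟨some z, mem_univ _, φ ∘ ψ, hφ.comp hψ, ?_⟩
    have ht : Tendsto (fun n => (some (v (ψ n)) : Option Y)) atTop (𝓝 (some z)) :=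
      ((continuous_some hd).tendsto z).comp hvz
    exact ht.congr fun n => by simp only [Function.comp_apply, ← hv (ψ n)]
  · push_neg at hc
    refine ⟨none, mem_univ _, id, strictMono_id, ?_⟩
    rw [tendsto_iff_dist_tendsto_zero, Metric.tendsto_atTop]
    intro ε hε
    have h2 := hc (ε/2) (by linarith)
    obtain ⟨N, hN⟩ := eventually_atTop.mp h2
    refine ⟨N, fun n hn => ?_⟩
    have h3 : dist (u n) (none : Option Y) < ε/2 := hN n hn
    have h4 : (0:ℝ) ≤ dist (u n) (none : Option Y) := dist_nonneg
    simp only [Function.comp_apply, id_eq]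
    rw [Real.dist_eq, sub_zero, abs_of_nonneg h4]
    linarith

private lemma connectedSpace_onePt (hd : ∀ p q : Option Y, dist p q = rho y₀ p q)
    (hcomp : ∀ y : Y, ¬ IsBounded (connectedComponent y)) :
    ConnectedSpace (Option Y) := by
  have hpre : IsPreconnected (univ : Set (Option Y)) := by
    apply isPreconnected_of_forall (none : Option Y)
    rintro (_ | a) -
    · exact ⟨{none}, subset_univ _, rfl, rfl, isPreconnected_singleton⟩
    · refine ⟨insert none (some '' connectedComponent a), subset_univ _,
        mem_insert _ _, ?_, ?_⟩
      · exact mem_insert_of_mem _ (mem_image_of_mem _ mem_connectedComponent)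
      · exact insert_none_preconnected hd isPreconnected_connectedComponent (hcomp a)
  haveI : PreconnectedSpace (Option Y) := ⟨hpre⟩
  exact { toNonempty := ⟨none⟩ }

end OnePtLemmas

section OnePtLC

open UniformSpace

variable {Y : Type*} [MetricSpace Y] {y₀ : Y}

private lemma far_unbounded [ProperSpace Y] [LocallyConnectedSpace Y]
    (hcomp : ∀ y : Y, ¬ IsBounded (connectedComponent y)) (R : ℝ) :
    ∃ R', R ≤ R' ∧ ∀ y : Y, R' < dist y y₀ →
      ¬ IsBounded (connectedComponentIn (closedBall y₀ R)ᶜ y) := by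
  set S : Set Y := (closedBall y₀ R)ᶜ with hS
  have hSopen : IsOpen S := isOpen_compl_iff.mpr Metric.isClosed_closedBall
  by_contra hcon
  push_neg at hcon
  have hseq : ∀ n : ℕ, ∃ y : Y, (R + 1 + n < dist y y₀) ∧
      IsBounded (connectedComponentIn S y) := by
    intro n
    obtain ⟨y, h1, h2⟩ := hcon (R + 1 + n) (by
      have : (0:ℝ) ≤ n := Nat.cast_nonneg n
      linarith)
    exact ⟨y, h1, h2⟩
  choose y hy hyb using hseq
  have hyS : ∀ n, y n ∈ S := by
    intro n
    simp only [hS, mem_compl_iff, mem_closedBall, not_le]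
    have : (0:ℝ) ≤ n := Nat.cast_nonneg n
    linarith [hy n]
  have hmeet : ∀ n, ∃ w ∈ closure (connectedComponentIn S (y n)), dist w y₀ ≤ R := by
    intro n
    by_contra hcw
    push_neg at hcw
    have hsub : closure (connectedComponentIn S (y n)) ⊆ S := by
      intro w hw
      simp only [hS, mem_compl_iff, mem_closedBall, not_le]
      exact hcw w hw
    have hclo : closure (connectedComponentIn S (y n)) ⊆ connectedComponentIn S (y n) :=
      (isPreconnected_connectedComponentIn.closure).subset_connectedComponentIn
        (subset_closure (mem_connectedComponentIn (hyS n))) hsub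
    have hclosed : IsClosed (connectedComponentIn S (y n)) :=
      isClosed_of_closure_subset hclo
    have hopen : IsOpen (connectedComponentIn S (y n)) := hSopen.connectedComponentIn
    have hclopen : IsClopen (connectedComponentIn S (y n)) := ⟨hclosed, hopen⟩
    have hsub2 := hclopen.connectedComponent_subset (mem_connectedComponentIn (hyS n))
    exact hcomp (y n) ((hyb n).subset hsub2)
  choose w hw hwR using hmeet
  have hz : ∀ n, ∃ z ∈ closure (connectedComponentIn S (y n)), dist z y₀ = R + 1 := by
    intro n
    have hpc : IsPreconnected (closure (connectedComponentIn S (y n))) :=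
      isPreconnected_connectedComponentIn.closure
    have hyc : y n ∈ closure (connectedComponentIn S (y n)) :=
      subset_closure (mem_connectedComponentIn (hyS n))
    have hcont : ContinuousOn (fun p => dist p y₀)
        (closure (connectedComponentIn S (y n))) :=
      (continuous_id.dist continuous_const).continuousOn
    have himage := hpc.intermediate_value (hw n) hyc hcont
    have hmem : R + 1 ∈ Icc (dist (w n) y₀) (dist (y n) y₀) := by
      constructor
      · linarith [hwR n]
      · have : (0:ℝ) ≤ n := Nat.cast_nonneg n
        linarith [hy n]
    obtain ⟨z, hz1, hz2⟩ := himage hmem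
    exact ⟨z, hz1, hz2⟩
  choose z hzc hzd using hz
  have hzsph : ∀ n, z n ∈ sphere y₀ (R+1) := by
    intro n
    rw [mem_sphere]
    exact hzd n
  obtain ⟨zz, hzz, ψ, hψ, hzt⟩ := (isCompact_sphere y₀ (R+1)).tendsto_subseq hzsph
  have hzzS : zz ∈ S := by
    simp only [hS, mem_compl_iff, mem_closedBall, not_le]
    have h1 : dist zz y₀ = R + 1 := mem_sphere.mp hzz
    linarith
  have hDopen : IsOpen (connectedComponentIn S zz) := hSopen.connectedComponentIn
  have hDmem : zz ∈ connectedComponentIn S zz := mem_connectedComponentIn hzzS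
  have hev : ∀ᶠ n in atTop, z (ψ n) ∈ connectedComponentIn S zz := by
    have := hzt (hDopen.mem_nhds hDmem)
    simpa [Function.comp] using this
  obtain ⟨N, hN⟩ := eventually_atTop.mp hev
  have hDeq : ∀ n, N ≤ n → connectedComponentIn S (y (ψ n)) = connectedComponentIn S zz := by
    intro n hn
    have h1 : z (ψ n) ∈ closure (connectedComponentIn S (y (ψ n))) := hzc (ψ n)
    have h2 : z (ψ n) ∈ connectedComponentIn S zz := hN n hn
    obtain ⟨p, hpD, hpC⟩ := _root_.mem_closure_iff.mp h1 _ hDopen h2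
    have e1 : connectedComponentIn S (y (ψ n)) = connectedComponentIn S p :=
      connectedComponentIn_eq hpC
    have e2 : connectedComponentIn S zz = connectedComponentIn S p :=
      connectedComponentIn_eq hpD
    rw [e1, e2]
  have hDb : IsBounded (connectedComponentIn S zz) := by
    rw [← hDeq N le_rfl]
    exact hyb (ψ N)
  obtain ⟨M, hM⟩ := (isBounded_iff_subset_closedBall y₀).mp hDb
  obtain ⟨k, hk⟩ := exists_nat_gt (M - R - 1)
  set n := max N k with hn
  have hmem : y (ψ n) ∈ connectedComponentIn S zz := by
    rw [← hDeq n (le_max_left _ _)]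
    exact mem_connectedComponentIn (hyS (ψ n))
  have h1 : dist (y (ψ n)) y₀ ≤ M := mem_closedBall.mp (hM hmem)
  have h2 : R + 1 + (ψ n : ℝ) < dist (y (ψ n)) y₀ := hy (ψ n)
  have h3 : (n : ℝ) ≤ (ψ n : ℝ) := by
    exact_mod_cast hψ.le_apply
  have h4 : (k : ℝ) ≤ (n : ℝ) := by
    exact_mod_cast le_max_right N k
  linarith

variable [MetricSpace (Option Y)]

private lemma locallyConnected_onePt (hd : ∀ p q : Option Y, dist p q = rho y₀ p q)
    [ProperSpace Y] [LocallyConnectedSpace Y]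
    (hcomp : ∀ y : Y, ¬ IsBounded (connectedComponent y)) :
    LocallyConnectedSpace (Option Y) := by
  rw [locallyConnectedSpace_iff_connected_subsets]
  rintro (_ | a) U hU
  · -- at ∞
    obtain ⟨ε, hε, hball⟩ := Metric.mem_nhds_iff.mp hU
    obtain ⟨R', hRR', hfar⟩ := far_unbounded (y₀ := y₀) hcomp (1/ε)
    set S : Set Y := (closedBall y₀ (1/ε))ᶜ with hS
    set W : Set Y := {b : Y | b ∈ S ∧ ¬ IsBounded (connectedComponentIn S b)} with hW
    have hWS : ∀ b ∈ W, 1/ε < dist b y₀ := by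
      intro b hb
      have := hb.1
      simpa only [hS, mem_compl_iff, mem_closedBall, not_le] using this
    have hR'0 : (0:ℝ) < 1 + R' := by
      have : (0:ℝ) < 1/ε := by positivity
      linarith
    refine ⟨insert none (some '' W), ?_, ?_, ?_⟩
    · -- neighborhood of none
      rw [Metric.mem_nhds_iff]
      refine ⟨1/(1+R'), by positivity, ?_⟩
      rintro (_ | b) hb
      · exact mem_insert _ _
      · rw [mem_ball, dist_some_none hd] at hb
        have h2 : (0:ℝ) < 1 + dist b y₀ := by positivity
        rw [div_lt_div_iff₀ h2 hR'0] at hb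
        have hfarb : R' < dist b y₀ := by linarith
        have hbS : b ∈ S := by
          simp only [hS, mem_compl_iff, mem_closedBall, not_le]
          linarith
        exact mem_insert_of_mem _ (mem_image_of_mem _ ⟨hbS, hfar b hfarb⟩)
    · -- preconnected
      apply isPreconnected_of_forall (none : Option Y)
      rintro p hp
      rcases mem_insert_iff.mp hp with rfl | ⟨b, hbW, rfl⟩
      · exact ⟨{none}, singleton_subset_iff.mpr (mem_insert _ _), rfl, rfl,
          isPreconnected_singleton⟩
      · refine ⟨insert none (some '' connectedComponentIn S b), ?_, mem_insert _ _, ?_, ?_⟩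
        · intro q hq
          rcases mem_insert_iff.mp hq with rfl | ⟨c, hc, rfl⟩
          · exact mem_insert _ _
          · refine mem_insert_of_mem _ (mem_image_of_mem _ ?_)
            have hcS : c ∈ S := connectedComponentIn_subset _ _ hc
            have heq : connectedComponentIn S b = connectedComponentIn S c :=
              connectedComponentIn_eq hc
            refine ⟨hcS, ?_⟩
            rw [← heq]
            exact hbW.2
        · exact mem_insert_of_mem _
            (mem_image_of_mem _ (mem_connectedComponentIn hbW.1))
        · exact insert_none_preconnected hd isPreconnected_connectedComponentIn hbW.2
    · -- contained in U
      rintro (_ | b) hb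
      · exact hball (mem_ball_self hε)
      · rcases mem_insert_iff.mp hb with h | ⟨c, hc, hceq⟩
        · exact absurd h (by simp)
        · apply hball
          rw [mem_ball, ← hceq]
          exact dist_none_lt hd hε (hWS _ hc)
  · -- at a finite point
    have hmap := map_nhds_some hd a
    have hU' : some ⁻¹' U ∈ 𝓝 a := by
      rw [← hmap] at hU
      exact hU
    obtain ⟨V, hV1, hV2, hV3⟩ :=
      locallyConnectedSpace_iff_connected_subsets.mp ‹LocallyConnectedSpace Y› a _ hU'
    refine ⟨some '' V, ?_, hV2.image _ (continuous_some hd).continuousOn, ?_⟩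
    · rw [← hmap]
      exact image_mem_map hV1
    · exact (image_mono hV3).trans (image_preimage_subset _ _)

end OnePtLC

/-- if the completion of `X` is proper, locally connected and has
no bounded connected component, then the completion of the one-point extension
`(αX, ρ)` is a Peano continuum: compact, connected and locally connected. -/
theorem completion_onePointExtension_peano
    {X : Type*} [MetricSpace X] (x₀ : X)
    (hproper : ProperSpace (UniformSpace.Completion X))
    (hlc : LocallyConnectedSpace (UniformSpace.Completion X))
    (hcomp : ∀ y : UniformSpace.Completion X, ¬ IsBounded (connectedComponent y))
    -- `(αX, ρ)`: the metric on `Option X` is the one-point extension metric `ρ`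
    [m : MetricSpace (Option X)]
    (hm : ∀ p q : Option X, dist p q = rho x₀ p q) :
    CompactSpace (UniformSpace.Completion (Option X)) ∧
      ConnectedSpace (UniformSpace.Completion (Option X)) ∧
      LocallyConnectedSpace (UniformSpace.Completion (Option X)) := by
  classical
  haveI := hproper
  haveI := hlc
  letI MO : MetricSpace (Option (UniformSpace.Completion X)) :=
    rhoMetric ((x₀ : UniformSpace.Completion X))
  have hd : ∀ p q : Option (UniformSpace.Completion X),
      dist p q = rho ((x₀ : UniformSpace.Completion X) : UniformSpace.Completion X) p q :=
    fun _ _ => rfl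
  haveI hcs : CompactSpace (Option (UniformSpace.Completion X)) := compactSpace_onePt hd
  haveI hconn : ConnectedSpace (Option (UniformSpace.Completion X)) :=
    connectedSpace_onePt hd hcomp
  haveI hlc' : LocallyConnectedSpace (Option (UniformSpace.Completion X)) :=
    locallyConnected_onePt hd hcomp
  haveI hcompl : CompleteSpace (Option (UniformSpace.Completion X)) := inferInstance
  set f : Option X → Option (UniformSpace.Completion X) :=
    Option.map ((↑) : X → UniformSpace.Completion X) with hf
  have hiso : Isometry f := by
    apply Isometry.of_dist_eq
    rintro (_ | x) (_ | y) <;>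
      simp only [hf, Option.map_none, Option.map_some, hm, hd, rho,
        UniformSpace.Completion.dist_eq]
  have hdr : DenseRange f := by
    rintro (_ | y)
    · exact subset_closure ⟨none, rfl⟩
    · have h1 : y ∈ closure (range ((↑) : X → UniformSpace.Completion X)) :=
        UniformSpace.Completion.denseRange_coe y
      have h2 := image_closure_subset_closure_image (continuous_some hd)
        (s := range ((↑) : X → UniformSpace.Completion X))
      have h3 : some y ∈ closure (some '' range ((↑) : X → UniformSpace.Completion X)) :=
        h2 ⟨y, h1, rfl⟩
      refine closure_mono ?_ h3
      rintro p ⟨q, ⟨x, rfl⟩, rfl⟩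
      exact ⟨some x, rfl⟩
  let pkg : AbstractCompletion (Option X) :=
    { space := Option (UniformSpace.Completion X)
      coe := f
      uniformStruct := inferInstance
      complete := inferInstance
      separation := inferInstance
      isUniformInducing := hiso.isUniformInducing
      dense := hdr }
  let e : UniformSpace.Completion (Option X) ≃ᵤ Option (UniformSpace.Completion X) :=
    (UniformSpace.Completion.cPkg (α := Option X)).compareEquiv pkg
  let ht := e.toHomeomorph
  refine ⟨ht.symm.compactSpace, ?_, ht.locallyConnectedSpace⟩
  haveI : PreconnectedSpace (UniformSpace.Completion (Option X)) := by
    constructor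
    have himg := (isPreconnected_univ (α := Option (UniformSpace.Completion X))).image
      ht.symm ht.symm.continuous.continuousOn
    rwa [image_univ, ht.symm.surjective.range_eq] at himg
  exact { toNonempty := ⟨((none : Option X) : UniformSpace.Completion (Option X))⟩ }
end

section
/- Let (X,d) be a metric space with basepoint x₀ and (αX, ρ) its one-point extension. The image of the embedding e : Cld_AW(X) → Cld_H(αX), e(A) = A ∪ {∞}, is exactly Cld_H(αX | {∞}) \ {{∞}}, the set of closed subsets of αX containing ∞ other than the singleton {∞}; consequently Cld_AW(X) is homeomorphic to Cld_H(αX | {∞}) \ {{∞}}. -/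
open Metric Set Topology Filter

/-- The set of all nonempty closed subsets of a topological space. -/
def Cld (X : Type*) [TopologicalSpace X] : Type _ :=
  {A : Set X // A.Nonempty ∧ IsClosed A}

/-- The Attouch-Wets metric with basepoint `x₀`. -/
noncomputable def dAW {X : Type*} [MetricSpace X] (x₀ : X) (A B : Set X) : ℝ :=
  ⨆ i : ℕ, min (1 / (i : ℝ))
    (sSup {r : ℝ | ∃ x : X, dist x x₀ ≤ (i : ℝ) ∧ r = |infDist x A - infDist x B|})

/-- The hyperspace `Cld_AW(X)` with the topology generated by `d_AW`. -/
def CldAW (X : Type*) [MetricSpace X] (x₀ : X) : Type _ := Cld X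

noncomputable instance {X : Type*} [MetricSpace X] (x₀ : X) :
    TopologicalSpace (CldAW X x₀) :=
  .generateFrom {U | ∃ (A : CldAW X x₀) (ε : ℝ), 0 < ε ∧
    U = {B : CldAW X x₀ | dAW x₀ A.1 B.1 < ε}}

/-- The topology generated by a distance function. -/
def distTop {Z : Type*} (ρ : Z → Z → ℝ) : TopologicalSpace Z :=
  .generateFrom {U | ∃ (z : Z) (ε : ℝ), 0 < ε ∧ U = {w : Z | ρ z w < ε}}

/-- Distance from a point to a set with respect to a distance function. -/
noncomputable def infRho {Z : Type*} (ρ : Z → Z → ℝ) (z : Z) (A : Set Z) : ℝ :=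
  sInf (ρ z '' A)

/-- The Hausdorff distance `d_H(A,B) = sup_z |d(z,A) − d(z,B)|` associated with
a distance function. -/
noncomputable def hausRho {Z : Type*} (ρ : Z → Z → ℝ) (A B : Set Z) : ℝ :=
  ⨆ z : Z, |infRho ρ z A - infRho ρ z B|

/-- The hyperspace `Cld_H(αX)`: nonempty `ρ`-closed subsets of `αX = X ∪ {∞}`,
with the topology generated by the Hausdorff metric of `ρ`. -/
def CldHAlpha (X : Type*) [MetricSpace X] (x₀ : X) : Type _ :=
  {A : Set (Option X) // A.Nonempty ∧ @IsClosed _ (distTop (rho x₀)) A}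

noncomputable instance {X : Type*} [MetricSpace X] (x₀ : X) :
    TopologicalSpace (CldHAlpha X x₀) :=
  .generateFrom {U | ∃ (A : CldHAlpha X x₀) (ε : ℝ), 0 < ε ∧
    U = {B : CldHAlpha X x₀ | hausRho (rho x₀) A.1 B.1 < ε}}

section Aux
open TopologicalSpace
variable {X : Type*} [MetricSpace X] (x₀ : X)

lemma c_pos (x : X) : 0 < 1 / (1 + dist x x₀) := by positivity

lemma c_le_one (x : X) : 1 / (1 + dist x x₀) ≤ 1 := by
  rw [div_le_one (by positivity)]; linarith [dist_nonneg (x := x) (y := x₀)]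

lemma c_sub (x y : X) : 1 / (1 + dist x x₀) ≤ dist x y + 1 / (1 + dist y x₀) := by
  have hx : (0:ℝ) < 1 + dist x x₀ := by positivity
  have hy : (0:ℝ) < 1 + dist y x₀ := by positivity
  have h2 : dist y x₀ - dist x x₀ ≤ dist x y := by
    have h := abs_le.mp (abs_dist_sub_le y x x₀)
    rw [dist_comm y x] at h
    linarith [h.2]
  have key : 1 / (1 + dist x x₀) - 1 / (1 + dist y x₀)
      = (1 / (1 + dist x x₀)) * (1 / (1 + dist y x₀)) * (dist y x₀ - dist x x₀) := by
    field_simp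
    ring
  have hab : (1 / (1 + dist x x₀)) * (1 / (1 + dist y x₀)) ≤ 1 :=
    mul_le_one₀ (c_le_one x₀ x) (c_pos x₀ y).le (c_le_one x₀ y)
  have hab0 : (0:ℝ) ≤ (1 / (1 + dist x x₀)) * (1 / (1 + dist y x₀)) := by positivity
  have h3 : (1 / (1 + dist x x₀)) * (1 / (1 + dist y x₀)) * (dist y x₀ - dist x x₀)
      ≤ (1 / (1 + dist x x₀)) * (1 / (1 + dist y x₀)) * dist x y :=
    mul_le_mul_of_nonneg_left h2 hab0
  have h4 : (1 / (1 + dist x x₀)) * (1 / (1 + dist y x₀)) * dist x y ≤ 1 * dist x y :=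
    mul_le_mul_of_nonneg_right hab dist_nonneg
  linarith [key, h3, h4]

lemma rho_nonneg (z w : Option X) : 0 ≤ rho x₀ z w := by
  cases z <;> cases w <;> simp only [rho]
  · exact le_refl 0
  · positivity
  · positivity
  · exact le_min dist_nonneg (by positivity)

lemma rho_le_two (z w : Option X) : rho x₀ z w ≤ 2 := by
  cases z with
  | none =>
    cases w with
    | none => norm_num [rho]
    | some y => simp only [rho]; linarith [c_le_one x₀ y]
  | some x =>
    cases w with
    | none => simp only [rho]; linarith [c_le_one x₀ x]
    | some y =>
      simp only [rho]
      exact (min_le_right _ _).trans (by linarith [c_le_one x₀ x, c_le_one x₀ y])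

lemma rho_self (z : Option X) : rho x₀ z z = 0 := by
  cases z with
  | none => rfl
  | some x =>
      simp only [rho, dist_self]
      exact min_eq_left (by positivity)

lemma rho_le_dist (x y : X) : rho x₀ (some x) (some y) ≤ dist x y := min_le_left _ _

lemma rho_triangle (a b c : Option X) : rho x₀ a c ≤ rho x₀ a b + rho x₀ b c := by
  cases a with
  | none =>
    cases b with
    | none =>
      cases c with
      | none => simp [rho]
      | some z => simp [rho]
    | some y =>
      cases c with
      | none => simp only [rho]; positivity
      | some z =>
        simp only [rho]
        rcases min_cases (dist y z) (1 / (1 + dist y x₀) + 1 / (1 + dist z x₀)) with ⟨h, _⟩ | ⟨h, _⟩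
        · rw [h]
          have h5 := c_sub x₀ z y
          rw [dist_comm z y] at h5
          linarith
        · rw [h]; linarith [c_pos x₀ y]
  | some x =>
    cases b with
    | none =>
      cases c with
      | none => simp [rho]
      | some z => simp only [rho]; exact min_le_right _ _
    | some y =>
      cases c with
      | none =>
        simp only [rho]
        rcases min_cases (dist x y) (1 / (1 + dist x x₀) + 1 / (1 + dist y x₀)) with ⟨h, _⟩ | ⟨h, _⟩
        · rw [h]; linarith [c_sub x₀ x y]
        · rw [h]; linarith [c_pos x₀ y]
      | some z =>
        simp only [rho]
        rcases min_cases (dist x y) (1 / (1 + dist x x₀) + 1 / (1 + dist y x₀)) with ⟨h1, _⟩ | ⟨h1, _⟩ <;>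
        rcases min_cases (dist y z) (1 / (1 + dist y x₀) + 1 / (1 + dist z x₀)) with ⟨h2, _⟩ | ⟨h2, _⟩ <;>
        rw [h1, h2]
        · exact (min_le_left _ _).trans (dist_triangle x y z)
        · refine (min_le_right _ _).trans ?_
          linarith [c_sub x₀ x y]
        · refine (min_le_right _ _).trans ?_
          have h5 := c_sub x₀ z y
          rw [dist_comm z y] at h5
          linarith
        · refine (min_le_right _ _).trans ?_
          linarith [c_pos x₀ y]

/-- In the topology generated by balls of `D`, a set is open provided every point has
a `D`-ball around it inside the set. -/
lemma isOpen_of_balls {Y : Type*} (D : Y → Y → ℝ) (hself : ∀ y, D y y = 0) (S : Set Y)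
    (h : ∀ y ∈ S, ∃ ε > 0, {w | D y w < ε} ⊆ S) :
    @IsOpen Y (generateFrom {U | ∃ (z : Y) (ε : ℝ), 0 < ε ∧ U = {w : Y | D z w < ε}}) S := by
  letI : TopologicalSpace Y := generateFrom {U | ∃ (z : Y) (ε : ℝ), 0 < ε ∧ U = {w : Y | D z w < ε}}
  choose! ε hε hsub using h
  have hS : S = ⋃ y ∈ S, {w | D y w < ε y} := by
    apply Subset.antisymm
    · intro y hy
      exact mem_biUnion hy (by simpa [hself y] using hε y hy)
    · intro w hw
      simp only [mem_iUnion] at hw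
      obtain ⟨y, hy, hw⟩ := hw
      exact hsub y hy hw
  rw [hS]
  exact isOpen_biUnion fun y hy =>
    isOpen_generateFrom_of_mem ⟨y, ε y, hε y hy, rfl⟩

/-- Extract a ball inside any open set of the generated topology, given triangle ineq. -/
lemma exists_ball_subset {Y : Type*} (D : Y → Y → ℝ)
    (htri : ∀ a b c, D a c ≤ D a b + D b c)
    {U : Set Y}
    (hU : @IsOpen Y (generateFrom {V | ∃ (z : Y) (ε : ℝ), 0 < ε ∧ V = {w : Y | D z w < ε}}) U)
    {z : Y} (hz : z ∈ U) : ∃ ε > 0, {w | D z w < ε} ⊆ U := by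
  induction hU with
  | basic V hV =>
    obtain ⟨z₀, ε₀, hε₀, rfl⟩ := hV
    refine ⟨ε₀ - D z₀ z, by simpa using hz, fun w hw => ?_⟩
    simp only [mem_setOf_eq] at *
    linarith [htri z₀ z w]
  | univ => exact ⟨1, one_pos, fun _ _ => trivial⟩
  | inter V W _ _ ihV ihW =>
    obtain ⟨ε₁, hε₁, h₁⟩ := ihV hz.1
    obtain ⟨ε₂, hε₂, h₂⟩ := ihW hz.2
    refine ⟨min ε₁ ε₂, lt_min hε₁ hε₂, fun w hw => ?_⟩
    simp only [mem_setOf_eq, lt_min_iff] at hw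
    exact ⟨h₁ hw.1, h₂ hw.2⟩
  | sUnion s hs ih =>
    obtain ⟨V, hV, hzV⟩ := hz
    obtain ⟨ε, hε, h⟩ := ih V hV hzV
    exact ⟨ε, hε, fun w hw => ⟨V, hV, h hw⟩⟩

end Aux

section Aux2
open TopologicalSpace
variable {X : Type*} [MetricSpace X] (x₀ : X)

/-- The embedding on sets: `A ↦ A ∪ {∞}`. -/
def eSet (A : Set X) : Set (Option X) := insert none (some '' A)

lemma eSet_nonempty (A : Set X) : (eSet A).Nonempty := ⟨none, mem_insert _ _⟩

lemma none_mem_eSet (A : Set X) : (none : Option X) ∈ eSet A := mem_insert _ _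

lemma infRho_bddBelow (z : Option X) (F : Set (Option X)) :
    BddBelow (rho x₀ z '' F) :=
  ⟨0, fun r ⟨w, _, hw⟩ => hw ▸ rho_nonneg x₀ z w⟩

lemma infRho_nonneg (z : Option X) (F : Set (Option X)) :
    0 ≤ infRho (rho x₀) z F := by
  rcases F.eq_empty_or_nonempty with rfl | hF
  · simp [infRho, Real.sInf_empty]
  · exact le_csInf (hF.image _) fun r ⟨w, _, hw⟩ => hw ▸ rho_nonneg x₀ z w

lemma infRho_le_two (z : Option X) {F : Set (Option X)} (hF : F.Nonempty) :
    infRho (rho x₀) z F ≤ 2 := by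
  obtain ⟨w, hw⟩ := hF
  exact (csInf_le (infRho_bddBelow x₀ z F) ⟨w, hw, rfl⟩).trans (rho_le_two x₀ z w)

lemma infRho_none {F : Set (Option X)} (hF : none ∈ F) :
    infRho (rho x₀) none F = 0 := by
  refine le_antisymm ?_ (infRho_nonneg x₀ none F)
  have h : infRho (rho x₀) none F ≤ rho x₀ none none :=
    csInf_le (infRho_bddBelow x₀ none F) ⟨none, hF, rfl⟩
  simpa [rho_self] using h

lemma infRho_some {A : Set X} (hA : A.Nonempty) (x : X) :
    infRho (rho x₀) (some x) (eSet A) = min (1 / (1 + dist x x₀)) (infDist x A) := by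
  apply le_antisymm
  · rcases le_total (1 / (1 + dist x x₀)) (infDist x A) with h | h
    · rw [min_eq_left h]
      exact (csInf_le (infRho_bddBelow x₀ _ _) ⟨none, mem_insert _ _, rfl⟩)
    · rw [min_eq_right h]
      refine le_of_forall_pos_le_add fun η hη => ?_
      obtain ⟨a, ha, hd⟩ := (infDist_lt_iff hA).mp (lt_add_of_pos_right _ hη)
      calc infRho (rho x₀) (some x) (eSet A)
          ≤ rho x₀ (some x) (some a) :=
            csInf_le (infRho_bddBelow x₀ _ _) ⟨some a, mem_insert_of_mem _ ⟨a, ha, rfl⟩, rfl⟩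
        _ ≤ dist x a := rho_le_dist x₀ x a
        _ ≤ infDist x A + η := hd.le
  · refine le_csInf ((eSet_nonempty A).image _) ?_
    rintro r ⟨w, hw, rfl⟩
    rcases hw with rfl | ⟨a, ha, rfl⟩
    · have : rho x₀ (some x) none = 1 / (1 + dist x x₀) := rfl
      rw [this]
      exact min_le_left _ _
    · simp only [rho]
      refine le_min ((min_le_right _ _).trans (infDist_le_dist_of_mem ha)) ?_
      exact (min_le_left _ _).trans (le_add_of_nonneg_right (c_pos x₀ a).le)

lemma hausRho_self (F : Set (Option X)) : hausRho (rho x₀) F F = 0 := by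
  have : ∀ z : Option X, |infRho (rho x₀) z F - infRho (rho x₀) z F| = 0 := by simp
  simp only [hausRho, this, ciSup_const]

lemma hausRho_term_le_two (z : Option X) {F G : Set (Option X)} (hF : F.Nonempty)
    (hG : G.Nonempty) : |infRho (rho x₀) z F - infRho (rho x₀) z G| ≤ 2 := by
  rw [abs_sub_le_iff]
  constructor <;>
    linarith [infRho_le_two x₀ z hF, infRho_le_two x₀ z hG,
      infRho_nonneg x₀ z F, infRho_nonneg x₀ z G]

lemma hausRho_bdd {F G : Set (Option X)} (hF : F.Nonempty) (hG : G.Nonempty) :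
    BddAbove (range fun z => |infRho (rho x₀) z F - infRho (rho x₀) z G|) :=
  ⟨2, by rintro r ⟨z, rfl⟩; exact hausRho_term_le_two x₀ z hF hG⟩

lemma le_hausRho (z : Option X) {F G : Set (Option X)} (hF : F.Nonempty) (hG : G.Nonempty) :
    |infRho (rho x₀) z F - infRho (rho x₀) z G| ≤ hausRho (rho x₀) F G :=
  le_ciSup (hausRho_bdd x₀ hF hG) z

lemma hausRho_le {F G : Set (Option X)} {m : ℝ}
    (h : ∀ z : Option X, |infRho (rho x₀) z F - infRho (rho x₀) z G| ≤ m) :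
    hausRho (rho x₀) F G ≤ m :=
  ciSup_le h

lemma hausRho_triangle {F G H : Set (Option X)} (hF : F.Nonempty) (hG : G.Nonempty)
    (hH : H.Nonempty) :
    hausRho (rho x₀) F H ≤ hausRho (rho x₀) F G + hausRho (rho x₀) G H := by
  refine hausRho_le x₀ fun z => ?_
  calc |infRho (rho x₀) z F - infRho (rho x₀) z H|
      ≤ |infRho (rho x₀) z F - infRho (rho x₀) z G|
        + |infRho (rho x₀) z G - infRho (rho x₀) z H| := abs_sub_le _ _ _
    _ ≤ _ := add_le_add (le_hausRho x₀ z hF hG) (le_hausRho x₀ z hG hH)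

end Aux2

section Aux3
open TopologicalSpace
variable {X : Type*} [MetricSpace X] (x₀ : X)

/-- The `i`-th comparison set of the Attouch–Wets sup. -/
def awSet (A B : Set X) (i : ℕ) : Set ℝ :=
  {r : ℝ | ∃ x : X, dist x x₀ ≤ (i : ℝ) ∧ r = |infDist x A - infDist x B|}

lemma awSet_nonempty (A B : Set X) (i : ℕ) : (awSet x₀ A B i).Nonempty :=
  ⟨|infDist x₀ A - infDist x₀ B|, x₀, by simp, rfl⟩

lemma awSet_bddAbove {A B : Set X} (hA : A.Nonempty) (hB : B.Nonempty) (i : ℕ) :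
    BddAbove (awSet x₀ A B i) := by
  obtain ⟨a₀, ha₀⟩ := hA
  obtain ⟨b₀, hb₀⟩ := hB
  refine ⟨(i : ℝ) + dist a₀ x₀ + ((i : ℝ) + dist b₀ x₀), ?_⟩
  rintro r ⟨x, hx, rfl⟩
  have h1 : infDist x A ≤ (i : ℝ) + dist a₀ x₀ :=
    (infDist_le_dist_of_mem ha₀).trans (by
      calc dist x a₀ ≤ dist x x₀ + dist x₀ a₀ := dist_triangle _ _ _
        _ ≤ (i : ℝ) + dist a₀ x₀ := by rw [dist_comm x₀ a₀]; linarith)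
  have h2 : infDist x B ≤ (i : ℝ) + dist b₀ x₀ :=
    (infDist_le_dist_of_mem hb₀).trans (by
      calc dist x b₀ ≤ dist x x₀ + dist x₀ b₀ := dist_triangle _ _ _
        _ ≤ (i : ℝ) + dist b₀ x₀ := by rw [dist_comm x₀ b₀]; linarith)
  rw [abs_sub_le_iff]
  constructor <;> linarith [infDist_nonneg (x := x) (s := A), infDist_nonneg (x := x) (s := B)]

lemma sSup_awSet_nonneg {A B : Set X} (hA : A.Nonempty) (hB : B.Nonempty) (i : ℕ) :
    0 ≤ sSup (awSet x₀ A B i) :=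
  le_trans (abs_nonneg _) (le_csSup (awSet_bddAbove x₀ hA hB i) ⟨x₀, by simp, rfl⟩)

lemma one_div_nat_le_one (i : ℕ) : 1 / ((i : ℕ) : ℝ) ≤ 1 := by
  cases i with
  | zero => simp
  | succ n =>
    rw [div_le_one (by positivity)]
    exact_mod_cast Nat.one_le_iff_ne_zero.mpr (Nat.succ_ne_zero n)

lemma dAW_eq (A B : Set X) :
    dAW x₀ A B = ⨆ i : ℕ, min (1 / (i : ℝ)) (sSup (awSet x₀ A B i)) := rfl

lemma dAW_bdd {A B : Set X} (hA : A.Nonempty) (hB : B.Nonempty) :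
    BddAbove (range fun i : ℕ => min (1 / (i : ℝ)) (sSup (awSet x₀ A B i))) := by
  refine ⟨1, ?_⟩
  rintro r ⟨i, rfl⟩
  exact (min_le_left _ _).trans (one_div_nat_le_one i)

lemma dAW_nonneg {A B : Set X} (hA : A.Nonempty) (hB : B.Nonempty) : 0 ≤ dAW x₀ A B := by
  rw [dAW_eq]
  refine le_trans ?_ (le_ciSup (dAW_bdd x₀ hA hB) 0)
  exact le_min (by norm_num) (sSup_awSet_nonneg x₀ hA hB 0)

lemma dAW_self {A : Set X} (hA : A.Nonempty) : dAW x₀ A A = 0 := by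
  rw [dAW_eq]
  have h : ∀ i : ℕ, min (1 / (i : ℝ)) (sSup (awSet x₀ A A i)) = 0 := by
    intro i
    have : awSet x₀ A A i = {0} := by
      apply Subset.antisymm
      · rintro r ⟨x, _, rfl⟩; simp
      · rintro r hr
        rw [mem_singleton_iff] at hr
        exact ⟨x₀, by simp, by simp [hr]⟩
    rw [this, csSup_singleton]
    exact min_eq_right (by positivity)
  simp only [h, ciSup_const]

lemma dAW_le_max {A B : Set X} (hA : A.Nonempty) (hB : B.Nonempty) (i : ℕ) :
    dAW x₀ A B ≤ max (sSup (awSet x₀ A B i)) (1 / ((i : ℝ) + 1)) := by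
  rw [dAW_eq]
  refine ciSup_le fun j => ?_
  rcases le_or_gt j i with hj | hj
  · refine le_trans (min_le_right _ _) (le_max_of_le_left ?_)
    refine csSup_le_csSup (awSet_bddAbove x₀ hA hB i) (awSet_nonempty x₀ A B j) ?_
    rintro r ⟨x, hx, rfl⟩
    exact ⟨x, hx.trans (by exact_mod_cast Nat.cast_le.mpr hj), rfl⟩
  · refine le_trans (min_le_left _ _) (le_max_of_le_right ?_)
    have hj' : ((i : ℝ) + 1) ≤ (j : ℝ) := by exact_mod_cast Nat.succ_le_of_lt hj
    exact one_div_le_one_div_of_le (by positivity) hj'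

lemma dAW_extract {A B : Set X} (hA : A.Nonempty) (hB : B.Nonempty) {δ : ℝ} {i : ℕ}
    (hd : dAW x₀ A B < δ) (hδi : δ < 1 / (i : ℝ)) :
    ∀ x : X, dist x x₀ ≤ (i : ℝ) → |infDist x A - infDist x B| < δ := by
  intro x hx
  have h1 : min (1 / (i : ℝ)) (sSup (awSet x₀ A B i)) < δ :=
    lt_of_le_of_lt (by rw [dAW_eq] at hd; exact le_ciSup (dAW_bdd x₀ hA hB) i) hd
  have h2 : sSup (awSet x₀ A B i) < δ := by
    rcases min_lt_iff.mp h1 with h | h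
    · exact absurd h (not_lt.mpr hδi.le)
    · exact h
  exact lt_of_le_of_lt (le_csSup (awSet_bddAbove x₀ hA hB i) ⟨x, hx, rfl⟩) h2

lemma min_subadd {a b c : ℝ} (ha : 0 ≤ a) (hb : 0 ≤ b) (hc : 0 ≤ c) :
    min a (b + c) ≤ min a b + min a c := by
  rcases le_total a b with h | h
  · calc min a (b + c) ≤ a := min_le_left _ _
      _ ≤ min a b + min a c := by
        rw [min_eq_left h]
        exact le_add_of_nonneg_right (le_min ha hc)
  · rcases le_total a c with h' | h'
    · calc min a (b + c) ≤ a := min_le_left _ _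
        _ ≤ min a b + min a c := by
          rw [min_eq_left h']
          exact le_add_of_nonneg_left (le_min ha hb)
    · rw [min_eq_right h, min_eq_right h']
      exact min_le_right _ _

lemma dAW_triangle {A B C : Set X} (hA : A.Nonempty) (hB : B.Nonempty) (hC : C.Nonempty) :
    dAW x₀ A C ≤ dAW x₀ A B + dAW x₀ B C := by
  rw [dAW_eq]
  refine ciSup_le fun i => ?_
  have hs : sSup (awSet x₀ A C i) ≤ sSup (awSet x₀ A B i) + sSup (awSet x₀ B C i) := by
    refine csSup_le (awSet_nonempty x₀ A C i) ?_
    rintro r ⟨x, hx, rfl⟩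
    calc |infDist x A - infDist x C|
        ≤ |infDist x A - infDist x B| + |infDist x B - infDist x C| := abs_sub_le _ _ _
      _ ≤ sSup (awSet x₀ A B i) + sSup (awSet x₀ B C i) :=
          add_le_add (le_csSup (awSet_bddAbove x₀ hA hB i) ⟨x, hx, rfl⟩)
            (le_csSup (awSet_bddAbove x₀ hB hC i) ⟨x, hx, rfl⟩)
  have hi : (0:ℝ) ≤ 1 / (i : ℝ) := by positivity
  calc min (1 / (i : ℝ)) (sSup (awSet x₀ A C i))
      ≤ min (1 / (i : ℝ)) (sSup (awSet x₀ A B i) + sSup (awSet x₀ B C i)) :=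
        min_le_min (le_refl _) hs
    _ ≤ min (1 / (i : ℝ)) (sSup (awSet x₀ A B i)) + min (1 / (i : ℝ)) (sSup (awSet x₀ B C i)) :=
        min_subadd hi (sSup_awSet_nonneg x₀ hA hB i) (sSup_awSet_nonneg x₀ hB hC i)
    _ ≤ dAW x₀ A B + dAW x₀ B C := by
        rw [dAW_eq, dAW_eq]
        exact add_le_add (le_ciSup (dAW_bdd x₀ hA hB) i) (le_ciSup (dAW_bdd x₀ hB hC) i)

end Aux3

section Aux4
open TopologicalSpace
variable {X : Type*} [MetricSpace X] (x₀ : X)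

lemma abs_min_sub_min (c a b : ℝ) : |min c a - min c b| ≤ |a - b| := by
  rcases le_total a b with h | h
  · rw [abs_of_nonpos (by simp [min_le_min (le_refl c) h] : min c a - min c b ≤ 0),
      abs_of_nonpos (by linarith : a - b ≤ 0)]
    rcases le_total c a with h1 | h1 <;> rcases le_total c b with h2 | h2 <;>
      simp [min_eq_left, min_eq_right, h1, h2] <;> linarith
  · rw [abs_of_nonneg (by simp [min_le_min (le_refl c) h] : 0 ≤ min c a - min c b),
      abs_of_nonneg (by linarith : 0 ≤ a - b)]
    rcases le_total c a with h1 | h1 <;> rcases le_total c b with h2 | h2 <;>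
      simp [min_eq_left, min_eq_right, h1, h2] <;> linarith

lemma abs_min_sub_min_le_c {c a b : ℝ} (hc : 0 ≤ c) (ha : 0 ≤ a) (hb : 0 ≤ b) :
    |min c a - min c b| ≤ c := by
  rw [abs_sub_le_iff]
  refine ⟨?_, ?_⟩ <;>
    linarith [min_le_left c a, min_le_left c b, le_min hc ha, le_min hc hb]

lemma lt_of_min_lt {c t δ : ℝ} (hc : δ ≤ c) (h : min c t < δ) : t < δ := by
  rcases min_lt_iff.mp h with h' | h'
  · exact absurd h' (not_lt.mpr hc)
  · exact h'

lemma ceil_bound {ε : ℝ} (hε : 0 < ε) : 1 / ((((⌈1/ε⌉₊ + 1 : ℕ) : ℝ)) + 1) < ε := by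
  have h1 : 1/ε ≤ (⌈1/ε⌉₊ : ℝ) := Nat.le_ceil _
  have h2 : ((⌈1/ε⌉₊ + 1 : ℕ) : ℝ) = (⌈1/ε⌉₊ : ℝ) + 1 := by push_cast; ring
  rw [h2, div_lt_iff₀ (by positivity)]
  have h3 : ε * (1/ε) = 1 := by field_simp
  nlinarith

lemma E1 {ε : ℝ} (hε : 0 < ε) :
    ∃ δ > 0, ∀ A B : Set X, A.Nonempty → B.Nonempty → dAW x₀ A B < δ →
      hausRho (rho x₀) (eSet A) (eSet B) < ε := by
  set i : ℕ := ⌈1/ε⌉₊ + 1 with hi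
  have hi1 : (1:ℝ) ≤ (i : ℝ) := by exact_mod_cast Nat.one_le_iff_ne_zero.mpr (by simp [hi])
  have hipos : (0:ℝ) < (i : ℝ) := by linarith
  have hie : 1 / ((i : ℝ) + 1) < ε := ceil_bound hε
  refine ⟨min (ε/2) (1/(2*(i:ℝ))), lt_min (by linarith) (by positivity), ?_⟩
  intro A B hA hB hd
  have hδi : min (ε/2) (1/(2*(i:ℝ))) < 1 / (i:ℝ) := by
    refine lt_of_le_of_lt (min_le_right _ _) ?_
    rw [div_lt_div_iff₀ (by positivity) hipos]
    linarith
  have hext := dAW_extract x₀ hA hB hd hδi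
  have hterm : ∀ z : Option X,
      |infRho (rho x₀) z (eSet A) - infRho (rho x₀) z (eSet B)|
        ≤ max (ε/2) (1 / ((i:ℝ) + 1)) := by
    intro z
    cases z with
    | none =>
      rw [infRho_none x₀ (none_mem_eSet A), infRho_none x₀ (none_mem_eSet B)]
      simp only [sub_zero, abs_zero]
      positivity
    | some x =>
      rw [infRho_some x₀ hA, infRho_some x₀ hB]
      rcases le_or_gt (dist x x₀) (i:ℝ) with hx | hx
      · refine le_max_of_le_left ?_
        refine (abs_min_sub_min _ _ _).trans ?_
        have := hext x hx
        have h5 : min (ε/2) (1/(2*(i:ℝ))) ≤ ε/2 := min_le_left _ _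
        linarith [this]
      · refine le_max_of_le_right ?_
        refine (abs_min_sub_min_le_c (c_pos x₀ x).le infDist_nonneg infDist_nonneg).trans ?_
        exact one_div_le_one_div_of_le (by positivity) (by linarith)
  calc hausRho (rho x₀) (eSet A) (eSet B) ≤ max (ε/2) (1 / ((i:ℝ) + 1)) :=
        hausRho_le x₀ hterm
    _ < ε := max_lt (by linarith) hie

lemma E2 {A : Set X} (hA : A.Nonempty) {ε : ℝ} (hε : 0 < ε) :
    ∃ δ > 0, ∀ B : Set X, B.Nonempty → hausRho (rho x₀) (eSet A) (eSet B) < δ →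
      dAW x₀ A B < ε := by
  obtain ⟨a₀, ha₀⟩ := hA
  have hA : A.Nonempty := ⟨a₀, ha₀⟩
  set R : ℝ := dist a₀ x₀ with hR
  have hR0 : 0 ≤ R := dist_nonneg
  set i : ℕ := ⌈1/ε⌉₊ + 1 with hi
  have hie : 1 / ((i : ℝ) + 1) < ε := ceil_bound hε
  have hi0 : (0:ℝ) ≤ (i:ℝ) := Nat.cast_nonneg _
  set M : ℝ := 2*(i:ℝ) + R + 2 with hM
  have hM0 : (0:ℝ) < 1 + M := by positivity
  set δ : ℝ := min (ε/2) (1/(1+M)) with hδ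
  have hδpos : 0 < δ := lt_min (by linarith) (by positivity)
  have hδM : δ ≤ 1/(1+M) := min_le_right _ _
  have hδε : δ ≤ ε/2 := min_le_left _ _
  refine ⟨δ, hδpos, ?_⟩
  intro B hB hd
  -- the generic pointwise bound
  have key : ∀ y : X, |min (1/(1+dist y x₀)) (infDist y A) - min (1/(1+dist y x₀)) (infDist y B)| < δ := by
    intro y
    have := le_hausRho x₀ (some y) (eSet_nonempty A) (eSet_nonempty B)
    rw [infRho_some x₀ hA, infRho_some x₀ hB] at this
    exact lt_of_le_of_lt this hd
  have hcM : ∀ y : X, dist y x₀ ≤ M → δ ≤ 1/(1+dist y x₀) := by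
    intro y hy
    exact hδM.trans (one_div_le_one_div_of_le (by positivity) (by linarith))
  -- a point of `A` close to `B`'s distance functional: if y ∈ A and |y| ≤ M then infDist y B < δ
  have memA_close : ∀ y ∈ A, dist y x₀ ≤ M → infDist y B < δ := by
    intro y hy hyM
    have hk := key y
    rw [infDist_zero_of_mem hy, min_eq_right (c_pos x₀ y).le] at hk
    rw [zero_sub, abs_neg, abs_of_nonneg (le_min (by positivity) infDist_nonneg)] at hk
    exact lt_of_min_lt (hcM y hyM) hk
  have memB_close : ∀ y ∈ B, dist y x₀ ≤ M → infDist y A < δ := by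
    intro y hy hyM
    have hk := key y
    rw [infDist_zero_of_mem hy, min_eq_right (c_pos x₀ y).le] at hk
    rw [sub_zero, abs_of_nonneg (le_min (by positivity) infDist_nonneg)] at hk
    exact lt_of_min_lt (hcM y hyM) hk
  -- `B` has a point near `a₀`
  have hBa₀ : infDist a₀ B < δ := memA_close a₀ ha₀ (by rw [hM]; linarith)
  -- the main bound on bounded points
  set s : ℝ := min (ε/4) 1 with hs
  have hs0 : 0 < s := lt_min (by linarith) one_pos
  have hmain : ∀ x : X, dist x x₀ ≤ (i:ℝ) → |infDist x A - infDist x B| ≤ ε/4 + ε/2 := by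
    intro x hx
    have hdAx : infDist x A ≤ (i:ℝ) + R := by
      refine (infDist_le_dist_of_mem ha₀).trans ?_
      calc dist x a₀ ≤ dist x x₀ + dist x₀ a₀ := dist_triangle _ _ _
        _ ≤ (i:ℝ) + R := by rw [dist_comm x₀ a₀, ← hR]; linarith
    have hdBx : infDist x B ≤ (i:ℝ) + R + 1 := by
      calc infDist x B ≤ infDist a₀ B + dist x a₀ := infDist_le_infDist_add_dist
        _ ≤ δ + ((i:ℝ) + R) := by
            have : dist x a₀ ≤ (i:ℝ) + R := by
              calc dist x a₀ ≤ dist x x₀ + dist x₀ a₀ := dist_triangle _ _ _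
                _ ≤ (i:ℝ) + R := by rw [dist_comm x₀ a₀, ← hR]; linarith
            linarith [hBa₀.le]
        _ ≤ (i:ℝ) + R + 1 := by
            have : δ ≤ 1 := hδM.trans (by
              rw [div_le_one hM0]; linarith)
            linarith
    -- step (a): infDist x B ≤ infDist x A + s + δ
    obtain ⟨a, haA, hax⟩ := (infDist_lt_iff hA).mp (lt_add_of_pos_right (infDist x A) hs0)
    have haM : dist a x₀ ≤ M := by
      calc dist a x₀ ≤ dist a x + dist x x₀ := dist_triangle _ _ _
        _ ≤ (infDist x A + s) + (i:ℝ) := by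
            rw [dist_comm a x]
            have hs1 : s ≤ 1 := min_le_right _ _
            linarith [hax.le]
        _ ≤ M := by
            have hs1 : s ≤ 1 := min_le_right _ _
            rw [hM]; linarith
    have haB : infDist a B < δ := memA_close a haA haM
    have hstep1 : infDist x B ≤ infDist x A + s + δ := by
      calc infDist x B ≤ infDist a B + dist x a := infDist_le_infDist_add_dist
        _ ≤ δ + (infDist x A + s) := by linarith [hax.le, haB.le]
        _ = infDist x A + s + δ := by ring
    -- step (b): infDist x A ≤ infDist x B + s + δ
    obtain ⟨b, hbB, hbx⟩ := (infDist_lt_iff hB).mp (lt_add_of_pos_right (infDist x B) hs0)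
    have hbM : dist b x₀ ≤ M := by
      calc dist b x₀ ≤ dist b x + dist x x₀ := dist_triangle _ _ _
        _ ≤ (infDist x B + s) + (i:ℝ) := by
            rw [dist_comm b x]
            linarith [hbx.le]
        _ ≤ M := by
            have hs1 : s ≤ 1 := min_le_right _ _
            rw [hM]; linarith
    have hbA : infDist b A < δ := memB_close b hbB hbM
    have hstep2 : infDist x A ≤ infDist x B + s + δ := by
      calc infDist x A ≤ infDist b A + dist x b := infDist_le_infDist_add_dist
        _ ≤ δ + (infDist x B + s) := by linarith [hbx.le, hbA.le]
        _ = infDist x B + s + δ := by ring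
    have hs2 : s ≤ ε/4 := min_le_left _ _
    rw [abs_sub_le_iff]
    constructor <;> linarith
  have hsup : sSup (awSet x₀ A B i) ≤ ε/4 + ε/2 := by
    refine csSup_le (awSet_nonempty x₀ A B i) ?_
    rintro r ⟨x, hx, rfl⟩
    exact hmain x hx
  calc dAW x₀ A B ≤ max (sSup (awSet x₀ A B i)) (1 / ((i:ℝ) + 1)) :=
        dAW_le_max x₀ hA hB i
    _ < ε := max_lt (lt_of_le_of_lt hsup (by linarith)) hie

end Aux4

section Aux5
open TopologicalSpace
variable {X : Type*} [MetricSpace X] (x₀ : X)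

/-- Recovering the original set from a subset of `αX`. -/
def rSet (F : Set (Option X)) : Set X := {x | some x ∈ F}

lemma rSet_eSet (A : Set X) : rSet (eSet A) = A := by
  ext x
  simp [rSet, eSet, Option.some_injective X |>.eq_iff]

lemma eSet_rSet {F : Set (Option X)} (hF : none ∈ F) : eSet (rSet F) = F := by
  ext z
  cases z with
  | none => simpa [eSet] using hF
  | some x =>
    simp [eSet, rSet, Option.some_injective X |>.eq_iff]

lemma eSet_closed {A : Set X} (hA : A.Nonempty) (hAc : IsClosed A) :
    @IsClosed _ (distTop (rho x₀)) (eSet A) := by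
  suffices hopen : @IsOpen _ (generateFrom
      {U | ∃ (z : Option X) (ε : ℝ), 0 < ε ∧ U = {w : Option X | rho x₀ z w < ε}})
      (eSet A)ᶜ by
    exact (@isOpen_compl_iff (Option X) (eSet A) (distTop (rho x₀))).mp hopen
  refine isOpen_of_balls (rho x₀) (rho_self x₀) _ ?_
  intro z hz
  cases z with
  | none => exact absurd (none_mem_eSet A) hz
  | some x =>
    have hx : x ∉ A := fun h => hz (mem_insert_of_mem _ ⟨x, h, rfl⟩)
    have hpos : 0 < infDist x A := (hAc.notMem_iff_infDist_pos hA).mp hx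
    refine ⟨min (infDist x A) (1 / (1 + dist x x₀)), lt_min hpos (c_pos x₀ x), ?_⟩
    intro w hw
    simp only [mem_setOf_eq] at hw
    intro hwF
    rcases hwF with rfl | ⟨y, hy, rfl⟩
    · have : rho x₀ (some x) none = 1 / (1 + dist x x₀) := rfl
      rw [this] at hw
      exact absurd hw (not_lt.mpr (min_le_right _ _))
    · have h1 : rho x₀ (some x) (some y)
          = min (dist x y) (1 / (1 + dist x x₀) + 1 / (1 + dist y x₀)) := rfl
      rw [h1] at hw
      have h2 : dist x y < infDist x A := by
        rcases min_lt_iff.mp hw with h | h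
        · exact h.trans_le (min_le_left _ _)
        · exfalso
          have h3 : 1/(1+dist x x₀) + 1/(1+dist y x₀) < 1/(1+dist x x₀) :=
            h.trans_le (min_le_right _ _)
          linarith [c_pos x₀ y]
      exact absurd (infDist_le_dist_of_mem hy) (not_le.mpr h2)

lemma rSet_closed {F : Set (Option X)} (hFc : @IsClosed _ (distTop (rho x₀)) F) :
    IsClosed (rSet F) := by
  rw [← isOpen_compl_iff]
  rw [Metric.isOpen_iff]
  intro x hx
  have hUopen : @IsOpen _ (distTop (rho x₀)) Fᶜ := hFc.isOpen_compl
  have hmem : (some x : Option X) ∈ Fᶜ := hx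
  obtain ⟨ε, hε, hsub⟩ := exists_ball_subset (rho x₀) (rho_triangle x₀) hUopen hmem
  refine ⟨ε, hε, ?_⟩
  intro y hy
  have : rho x₀ (some x) (some y) < ε :=
    lt_of_le_of_lt (rho_le_dist x₀ x y) (by rwa [Metric.mem_ball, dist_comm] at hy)
  exact hsub this

lemma rSet_nonempty {F : Set (Option X)} (hmem : none ∈ F) (hne : F ≠ {none}) :
    (rSet F).Nonempty := by
  by_contra h
  rw [not_nonempty_iff_eq_empty] at h
  apply hne
  apply Subset.antisymm
  · intro z hz
    cases z with
    | none => exact rfl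
    | some x => exact absurd (show x ∈ rSet F from hz) (by simp [h])
  · intro z hz
    rw [mem_singleton_iff] at hz
    rw [hz]; exact hmem

end Aux5

section Main
open TopologicalSpace
variable {X : Type*} [MetricSpace X] (x₀ : X)

lemma eSet_ne {A : Set X} (hA : A.Nonempty) : eSet A ≠ {(none : Option X)} := by
  obtain ⟨a, ha⟩ := hA
  intro h
  have : (some a : Option X) ∈ eSet A := mem_insert_of_mem _ ⟨a, ha, rfl⟩
  rw [h] at this
  exact Option.some_ne_none a (mem_singleton_iff.mp this)

/-- The embedding `Cld_AW(X) → Cld_H(αX)`. -/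
noncomputable def eCld (A : CldAW X x₀) : CldHAlpha X x₀ :=
  ⟨eSet A.1, eSet_nonempty _, eSet_closed x₀ A.2.1 A.2.2⟩

lemma cont_eCld : Continuous (fun A : CldAW X x₀ => eCld x₀ A) := by
  refine (continuous_generateFrom_iff
    (b := {U | ∃ (F : CldHAlpha X x₀) (ε : ℝ), 0 < ε ∧
      U = {G : CldHAlpha X x₀ | hausRho (rho x₀) F.1 G.1 < ε}})).mpr ?_
  rintro U ⟨F₀, ε, hε, rfl⟩
  suffices h : @IsOpen _ (generateFrom {U | ∃ (A : CldAW X x₀) (ε : ℝ), 0 < ε ∧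
      U = {B : CldAW X x₀ | dAW x₀ A.1 B.1 < ε}})
      ((fun A : CldAW X x₀ => eCld x₀ A) ⁻¹' {G | hausRho (rho x₀) F₀.1 G.1 < ε}) from h
  refine isOpen_of_balls (fun A B : CldAW X x₀ => dAW x₀ A.1 B.1)
    (fun A => dAW_self x₀ A.2.1) _ ?_
  intro A₀ hA₀
  have hA₀' : hausRho (rho x₀) F₀.1 (eSet A₀.1) < ε := hA₀
  set η : ℝ := ε - hausRho (rho x₀) F₀.1 (eSet A₀.1) with hη
  have hηpos : 0 < η := by rw [hη]; linarith
  obtain ⟨δ, hδ, himp⟩ := E1 (x₀ := x₀) hηpos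
  refine ⟨δ, hδ, ?_⟩
  intro B hB
  have h1 : hausRho (rho x₀) (eSet A₀.1) (eSet B.1) < η :=
    himp A₀.1 B.1 A₀.2.1 B.2.1 hB
  have h2 : hausRho (rho x₀) F₀.1 (eSet B.1)
      ≤ hausRho (rho x₀) F₀.1 (eSet A₀.1) + hausRho (rho x₀) (eSet A₀.1) (eSet B.1) :=
    hausRho_triangle x₀ F₀.2.1 (eSet_nonempty _) (eSet_nonempty _)
  show hausRho (rho x₀) F₀.1 (eSet B.1) < ε
  linarith

/-- The inverse map on the subset of `Cld_H(αX)`. -/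
noncomputable def rCld
    (F : {F : CldHAlpha X x₀ | (none : Option X) ∈ F.1 ∧ F.1 ≠ {(none : Option X)}}) :
    CldAW X x₀ :=
  ⟨rSet F.1.1, rSet_nonempty F.2.1 F.2.2, rSet_closed x₀ F.1.2.2⟩

lemma cont_rCld : Continuous (fun F => rCld x₀ F) := by
  refine (continuous_generateFrom_iff
    (b := {U | ∃ (A : CldAW X x₀) (ε : ℝ), 0 < ε ∧
      U = {B : CldAW X x₀ | dAW x₀ A.1 B.1 < ε}})).mpr ?_
  rintro U ⟨A₀, ε, hε, rfl⟩
  set T := {F : CldHAlpha X x₀ | (none : Option X) ∈ F.1 ∧ F.1 ≠ {(none : Option X)}} with hT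
  set P : Set T := (fun F : T => rCld x₀ F) ⁻¹'
      {B : CldAW X x₀ | dAW x₀ A₀.1 B.1 < ε} with hP
  show IsOpen P
  have step : ∀ F₁ : T, F₁ ∈ P → ∃ δ > 0, ∀ G : T,
      hausRho (rho x₀) F₁.1.1 G.1.1 < δ → G ∈ P := by
    intro F₁ hF₁
    have hA₁ : (rSet F₁.1.1).Nonempty := rSet_nonempty F₁.2.1 F₁.2.2
    have h₁ : dAW x₀ A₀.1 (rSet F₁.1.1) < ε := hF₁
    have hηpos : 0 < ε - dAW x₀ A₀.1 (rSet F₁.1.1) := by linarith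
    obtain ⟨δ, hδ, himp⟩ := E2 (x₀ := x₀) hA₁ hηpos
    refine ⟨δ, hδ, ?_⟩
    intro G hG
    have hBne : (rSet G.1.1).Nonempty := rSet_nonempty G.2.1 G.2.2
    have he1 : eSet (rSet F₁.1.1) = F₁.1.1 := eSet_rSet F₁.2.1
    have he2 : eSet (rSet G.1.1) = G.1.1 := eSet_rSet G.2.1
    have h2 : dAW x₀ (rSet F₁.1.1) (rSet G.1.1) < ε - dAW x₀ A₀.1 (rSet F₁.1.1) := by
      apply himp _ hBne
      rw [he1, he2]
      exact hG
    have h3 : dAW x₀ A₀.1 (rSet G.1.1)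
        ≤ dAW x₀ A₀.1 (rSet F₁.1.1) + dAW x₀ (rSet F₁.1.1) (rSet G.1.1) :=
      dAW_triangle x₀ A₀.2.1 hA₁ hBne
    show dAW x₀ A₀.1 (rSet G.1.1) < ε
    linarith
  choose! δ hδ himp using step
  rw [isOpen_induced_iff]
  refine ⟨⋃ (F₁ : T) (_ : F₁ ∈ P), {G : CldHAlpha X x₀ | hausRho (rho x₀) F₁.1.1 G.1 < δ F₁}, ?_, ?_⟩
  · refine isOpen_iUnion fun F₁ => isOpen_iUnion fun hF₁ => ?_
    exact isOpen_generateFrom_of_mem ⟨F₁.1, δ F₁, hδ F₁ hF₁, rfl⟩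
  · ext G
    simp only [mem_preimage, mem_iUnion, mem_setOf_eq]
    constructor
    · rintro ⟨F₁, hF₁, hG⟩
      exact himp F₁ hF₁ G hG
    · intro hG
      refine ⟨G, hG, ?_⟩
      rw [hausRho_self]
      exact hδ G hG

end Main

/-- the image of the embedding `e : Cld_AW(X) → Cld_H(αX)`,
`e(A) = A ∪ {∞}`, is exactly `Cld_H(αX | {∞}) \ {{∞}}`; consequently
`Cld_AW(X)` is homeomorphic to `Cld_H(αX | {∞}) \ {{∞}}`. -/
theorem range_embedding_union_infty {X : Type*} [MetricSpace X] (x₀ : X) :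
    ∃ h : ∀ A : CldAW X x₀,
      (insert (none : Option X) (some '' A.1)).Nonempty ∧
        @IsClosed _ (distTop (rho x₀)) (insert (none : Option X) (some '' A.1)),
      Set.range (fun A : CldAW X x₀ =>
          (⟨insert (none : Option X) (some '' A.1), h A⟩ : CldHAlpha X x₀)) =
        {F : CldHAlpha X x₀ | (none : Option X) ∈ F.1 ∧ F.1 ≠ {(none : Option X)}} ∧
      Nonempty (CldAW X x₀ ≃ₜ
        {F : CldHAlpha X x₀ | (none : Option X) ∈ F.1 ∧ F.1 ≠ {(none : Option X)}}) := by
  refine ⟨fun A => ⟨eSet_nonempty A.1, eSet_closed x₀ A.2.1 A.2.2⟩, ?_, ?_⟩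
  · ext F
    constructor
    · rintro ⟨A, rfl⟩
      exact ⟨mem_insert _ _, eSet_ne A.2.1⟩
    · rintro ⟨hmem, hne⟩
      refine ⟨⟨rSet F.1, rSet_nonempty hmem hne, rSet_closed x₀ F.2.2⟩, ?_⟩
      exact Subtype.ext (eSet_rSet hmem)
  · refine ⟨{ toFun := fun A => ⟨eCld x₀ A, none_mem_eSet A.1, eSet_ne A.2.1⟩
              invFun := fun F => rCld x₀ F
              left_inv := fun A => Subtype.ext (rSet_eSet A.1)
              right_inv := fun F => Subtype.ext (Subtype.ext (eSet_rSet F.2.1))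
              continuous_toFun := ?_
              continuous_invFun := cont_rCld x₀ }⟩
    exact (cont_eCld x₀).subtype_mk _
end

section
/- For a metric space (X,d) with basepoint x₀, the function ρ on αX = X ∪ {∞} defined by ρ(x,y) = min{d(x,y), 1/(1+d(x,x₀)) + 1/(1+d(y,x₀))} for x,y ∈ X, ρ(x,∞) = ρ(∞,x) = 1/(1+d(x,x₀)) for x ∈ X, and ρ(∞,∞) = 0, is a metric on αX; the diameter of (αX, ρ) is less than 2, and the subspace (X, ρ|X×X) is homeomorphic to (X,d) via the identity. -/
open Metric Set Topology Filter

lemma rhoF_pos {X : Type*} [MetricSpace X] (x₀ x : X) : 0 < 1 / (1 + dist x x₀) := by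
  have := dist_nonneg (x := x) (y := x₀); positivity

lemma rhoF_le_one {X : Type*} [MetricSpace X] (x₀ x : X) : 1 / (1 + dist x x₀) ≤ 1 := by
  have h := dist_nonneg (x := x) (y := x₀)
  rw [div_le_one (by linarith)]; linarith

lemma rhoF_lip {X : Type*} [MetricSpace X] (x₀ x y : X) :
    1 / (1 + dist x x₀) ≤ 1 / (1 + dist y x₀) + dist x y := by
  have ha : (0:ℝ) ≤ dist x x₀ := dist_nonneg
  have hb : (0:ℝ) ≤ dist y x₀ := dist_nonneg
  have hd : (0:ℝ) ≤ dist x y := dist_nonneg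
  have htri : dist y x₀ ≤ dist y x + dist x x₀ := dist_triangle _ _ _
  have hcomm : dist y x = dist x y := dist_comm _ _
  have h1 : (0:ℝ) < 1 + dist x x₀ := by linarith
  have h2 : (0:ℝ) < 1 + dist y x₀ := by linarith
  have key : 1 / (1 + dist x x₀) - 1 / (1 + dist y x₀)
      = (dist y x₀ - dist x x₀) / ((1 + dist x x₀) * (1 + dist y x₀)) := by
    field_simp
    ring
  have hD : (1:ℝ) ≤ (1 + dist x x₀) * (1 + dist y x₀) := by nlinarith
  have hnum : dist y x₀ - dist x x₀ ≤ dist x y := by linarith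
  have hle : (dist y x₀ - dist x x₀) / ((1 + dist x x₀) * (1 + dist y x₀)) ≤ dist x y := by
    rcases le_total (dist y x₀ - dist x x₀) 0 with h | h
    · exact le_trans (div_nonpos_of_nonpos_of_nonneg h (by nlinarith)) hd
    · calc (dist y x₀ - dist x x₀) / ((1 + dist x x₀) * (1 + dist y x₀))
          ≤ (dist y x₀ - dist x x₀) / 1 := by
            apply div_le_div_of_nonneg_left h (by norm_num) hD
        _ = dist y x₀ - dist x x₀ := div_one _
        _ ≤ dist x y := hnum
  linarith [key ▸ hle]

/-- `ρ` is a metric on `αX = X ∪ {∞}`, the diameter of `(αX, ρ)`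
is less than `2`, and the subspace `(X, ρ|X×X)` is homeomorphic to `(X,d)` via
the identity (i.e. the topology induced on `X` by `ρ` is the metric topology). -/
theorem rho_is_metric_diam_lt_two {X : Type*} [MetricSpace X] (x₀ : X) :
    (∀ p q : Option X, 0 ≤ rho x₀ p q) ∧
    (∀ p q : Option X, rho x₀ p q = 0 ↔ p = q) ∧
    (∀ p q : Option X, rho x₀ p q = rho x₀ q p) ∧
    (∀ p q r : Option X, rho x₀ p r ≤ rho x₀ p q + rho x₀ q r) ∧
    (∀ p q : Option X, rho x₀ p q < 2) ∧
    TopologicalSpace.induced (some : X → Option X) (distTop (rho x₀)) =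
      (inferInstance : TopologicalSpace X) := by
  refine ⟨?_, ?_, ?_, ?_, ?_, ?_⟩
  · -- nonneg
    intro p q
    rcases p with _ | x <;> rcases q with _ | y <;> simp only [rho]
    · norm_num
    · exact (rhoF_pos x₀ y).le
    · exact (rhoF_pos x₀ x).le
    · exact le_min dist_nonneg (by linarith [rhoF_pos x₀ x, rhoF_pos x₀ y])
  · -- eq zero iff
    intro p q
    rcases p with _ | x <;> rcases q with _ | y <;> simp only [rho]
    · exact iff_of_false (rhoF_pos x₀ y).ne' (by simp)
    · exact iff_of_false (rhoF_pos x₀ x).ne' (by simp)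
    · rw [Option.some.injEq]
      constructor
      · intro h
        have hb : 0 < 1 / (1 + dist x x₀) + 1 / (1 + dist y x₀) := by
          linarith [rhoF_pos x₀ x, rhoF_pos x₀ y]
        rcases (dist_nonneg (x := x) (y := y)).lt_or_eq with hlt | heq
        · exact absurd h (lt_min hlt hb).ne'
        · exact dist_eq_zero.mp heq.symm
      · rintro rfl
        rw [dist_self]
        exact min_eq_left (by linarith [rhoF_pos x₀ x])
  · -- symm
    intro p q
    rcases p with _ | x <;> rcases q with _ | y <;> simp [rho, dist_comm, add_comm]
  · -- triangle
    intro p q r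
    rcases p with _ | x <;> rcases q with _ | y <;> rcases r with _ | z <;>
      simp only [rho]
    · -- none none none
      norm_num
    · -- none none some z
      linarith [rhoF_pos x₀ z]
    · -- none some y none
      linarith [rhoF_pos x₀ y]
    · -- none some y some z
      rcases min_cases (dist y z)
        (1 / (1 + dist y x₀) + 1 / (1 + dist z x₀)) with ⟨h2, _⟩ | ⟨h2, _⟩ <;> rw [h2]
      · have h4 := rhoF_lip x₀ z y
        rw [dist_comm z y] at h4; linarith
      · linarith [rhoF_pos x₀ y]
    · -- some x none none
      linarith [rhoF_pos x₀ x]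
    · -- some x none some z
      exact min_le_right _ _
    · -- some x some y none
      rcases min_cases (dist x y)
        (1 / (1 + dist x x₀) + 1 / (1 + dist y x₀)) with ⟨h1, _⟩ | ⟨h1, _⟩ <;> rw [h1]
      · linarith [rhoF_lip x₀ x y]
      · linarith [rhoF_pos x₀ y]
    · -- some x some y some z
      rcases min_cases (dist x y)
        (1 / (1 + dist x x₀) + 1 / (1 + dist y x₀)) with ⟨h1, _⟩ | ⟨h1, _⟩ <;>
      rcases min_cases (dist y z)
        (1 / (1 + dist y x₀) + 1 / (1 + dist z x₀)) with ⟨h2, _⟩ | ⟨h2, _⟩ <;>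
      rw [h1, h2]
      · calc min (dist x z) _ ≤ dist x z := min_le_left _ _
          _ ≤ dist x y + dist y z := dist_triangle _ _ _
      · have h3 := min_le_right (dist x z) (1 / (1 + dist x x₀) + 1 / (1 + dist z x₀))
        have h4 := rhoF_lip x₀ x y
        linarith
      · have h3 := min_le_right (dist x z) (1 / (1 + dist x x₀) + 1 / (1 + dist z x₀))
        have h4 := rhoF_lip x₀ z y
        rw [dist_comm z y] at h4
        linarith
      · have h3 := min_le_right (dist x z) (1 / (1 + dist x x₀) + 1 / (1 + dist z x₀))
        linarith [rhoF_pos x₀ y]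
  · -- bound by 2
    intro p q
    rcases p with _ | x <;> rcases q with _ | y <;> simp only [rho]
    · norm_num
    · linarith [rhoF_le_one x₀ y]
    · linarith [rhoF_le_one x₀ x]
    · by_cases hx : x = x₀
      · by_cases hy : y = x₀
        · have hd0 : dist x y = 0 := by rw [hx, hy, dist_self]
          calc min (dist x y) _ ≤ dist x y := min_le_left _ _
            _ = 0 := hd0
            _ < 2 := by norm_num
        · have hy' : 0 < dist y x₀ := dist_pos.mpr hy
          have h5 : 1 / (1 + dist y x₀) < 1 := by
            rw [div_lt_one (by linarith)]; linarith
          calc min (dist x y) _ ≤ _ := min_le_right _ _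
            _ < 2 := by linarith [rhoF_le_one x₀ x]
      · have hx' : 0 < dist x x₀ := dist_pos.mpr hx
        have h5 : 1 / (1 + dist x x₀) < 1 := by
          rw [div_lt_one (by linarith)]; linarith
        calc min (dist x y) _ ≤ _ := min_le_right _ _
          _ < 2 := by linarith [rhoF_le_one x₀ y]
  · -- topology
    have hFc : Continuous fun y : X => 1 / (1 + dist y x₀) := by
      apply Continuous.div continuous_const
      · exact continuous_const.add (Continuous.dist continuous_id continuous_const)
      · intro y; have := dist_nonneg (x := y) (y := x₀); positivity
    have key : TopologicalSpace.induced (some : X → Option X) (distTop (rho x₀))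
        = TopologicalSpace.generateFrom (((some : X → Option X) ⁻¹' ·) ''
            {U | ∃ (z : Option X) (ε : ℝ), 0 < ε ∧ U = {w | rho x₀ z w < ε}}) := by
      rw [distTop, induced_generateFrom_eq]
    rw [key]
    apply le_antisymm
    · -- generated ≤ metric : every metric-open set is generated-open
      rw [TopologicalSpace.le_def]
      intro U hU
      rw [Metric.isOpen_iff] at hU
      choose r hr hball using hU
      have hUeq : U = ⋃₀ {V | ∃ (x : X) (hx : x ∈ U),
          V = (some : X → Option X) ⁻¹'
            {w | rho x₀ (some x) w < min (r x hx) (1 / (1 + dist x x₀))}} := by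
        ext y
        constructor
        · intro hy
          refine ⟨_, ⟨y, hy, rfl⟩, ?_⟩
          show rho x₀ (some y) (some y) < _
          simp only [rho, dist_self]
          have h0 : (0:ℝ) ≤ 1 / (1 + dist y x₀) + 1 / (1 + dist y x₀) := by
            linarith [rhoF_pos x₀ y]
          rw [min_eq_left h0]
          exact lt_min (hr y hy) (rhoF_pos x₀ y)
        · rintro ⟨V, ⟨x, hx, rfl⟩, hyV⟩
          have hyV' : rho x₀ (some x) (some y) < min (r x hx) (1 / (1 + dist x x₀)) := hyV
          simp only [rho] at hyV'
          have hdx : dist x y < r x hx := by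
            rcases min_lt_iff.mp hyV' with h | h
            · exact h.trans_le (min_le_left _ _)
            · exfalso
              have := min_le_right (r x hx) (1 / (1 + dist x x₀))
              linarith [rhoF_pos x₀ y]
          exact hball x hx (Metric.mem_ball'.mpr hdx)
      rw [hUeq]
      apply TopologicalSpace.GenerateOpen.sUnion
      rintro V ⟨x, hx, rfl⟩
      exact TopologicalSpace.GenerateOpen.basic _
        ⟨_, ⟨some x, min (r x hx) (1 / (1 + dist x x₀)),
          lt_min (hr x hx) (rhoF_pos x₀ x), rfl⟩, rfl⟩
    · -- metric ≤ generated : each subbasic set is metric-open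
      apply le_generateFrom
      rintro V ⟨U, ⟨z, ε, hε, rfl⟩, rfl⟩
      rcases z with _ | v
      · show IsOpen {y : X | rho x₀ none (some y) < ε}
        simp only [rho]
        exact isOpen_lt hFc continuous_const
      · show IsOpen {y : X | rho x₀ (some v) (some y) < ε}
        simp only [rho]
        exact isOpen_lt (Continuous.min (Continuous.dist continuous_const continuous_id)
          (continuous_const.add hFc)) continuous_const
end
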